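/- arXiv:2209.03775 — 4 statements merged into one kernel-verified Lean document; each statement's English description precedes it below -/
import Mathlib

section
/- For every x ∈ [0,1]: P_{3,1}(x) = 1 + (x−1)·e^{−x} − (2/√3)·e^{−x/2}·sin(√3·x/2); P_{3,2}(x) = −e^{−x} + e^{−x/2}·((1/√3)·sin(√3·x/2) + cos(√3·x/2)); and P_{3,3}(x) = (2−x)·e^{−x} + e^{−x/2}·((1/√3)·sin(√3·x/2) − cos(√3·x/2)). In particular, P_{3,1} = 1 − (2/√(3e))·sin(√3/2). -/
open MeasureTheory intervalIntegral

/-- `R n p k x` : probability that, in a dart game with `p` remaining players where the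
probability of beating the best throw so far is `x`, the `k`-th player in throwing order
wins after exactly `n` further throws. -/
noncomputable def R : ℕ → ℕ → ℕ → ℝ → ℝ
  | 0, p, k, _ => if p = 1 ∧ k = 1 then 1 else 0
  | n + 1, p, k, x =>
      if p ≤ 1 then 0
      else if k = 1 then ∫ v in (0:ℝ)..x, R n p p v
      else (1 - x) * R n (p - 1) (k - 1) x + ∫ v in (0:ℝ)..x, R n p (k - 1) v

/-- `P p k x = ∑_{n≥0} R_{n,p,k}(x)` : the probability that, when `p` players remain and
the probability of beating the best throw so far is `x`, the `k`-th player in throwing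
order wins the game. -/
noncomputable def P (p k : ℕ) (x : ℝ) : ℝ := ∑' n : ℕ, R n p k x

/-- basis functions -/
noncomputable def E (j : ℕ) (x : ℝ) : ℝ := x ^ j / j.factorial

lemma E_zero (x : ℝ) : E 0 x = 1 := by simp [E]

lemma continuous_E (j : ℕ) : Continuous (E j) := by
  exact (continuous_pow j).div_const _

lemma intervalIntegrable_E (j : ℕ) (x : ℝ) :
    IntervalIntegrable (E j) volume 0 x := (continuous_E j).intervalIntegrable 0 x

lemma integral_E (j : ℕ) (x : ℝ) : (∫ v in (0:ℝ)..x, E j v) = E (j+1) x := by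
  have h : (∫ v in (0:ℝ)..x, E j v) = (∫ v in (0:ℝ)..x, v ^ j) / (j.factorial : ℝ) := by
    simp [E, div_eq_mul_inv, intervalIntegral.integral_mul_const]
  rw [h, integral_pow]
  have h1 : ((j:ℝ) + 1) ≠ 0 := by positivity
  have h2 : ((j.factorial) : ℝ) ≠ 0 := by positivity
  rw [E, Nat.factorial_succ]
  push_cast
  field_simp
  simp

lemma x_mul_E (j : ℕ) (x : ℝ) : x * E j x = ((j:ℝ)+1) * E (j+1) x := by
  have h2 : ((j.factorial) : ℝ) ≠ 0 := by positivity
  rw [E, E, Nat.factorial_succ]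
  push_cast
  field_simp
  ring

/-- parity indicators -/
noncomputable def χe (n : ℕ) : ℝ := if Even n ∧ 2 ≤ n then 1 else 0
noncomputable def χo (n : ℕ) : ℝ := if Odd n then 1 else 0

lemma R_one (n : ℕ) (x : ℝ) : R n 1 1 x = if n = 0 then 1 else 0 := by
  cases n <;> simp [R]

lemma R_two (n : ℕ) (x : ℝ) :
    R n 2 1 x = χe n * (E (n-1) x - E n x) ∧
    R n 2 2 x = χo n * (E (n-1) x - E n x) := by
  induction n generalizing x with
  | zero => simp [R, χe, χo]
  | succ n ih =>
    have ih1 : ∀ y, R n 2 1 y = χe n * (E (n-1) y - E n y) := fun y => (ih (x := y)).1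
    have ih2 : ∀ y, R n 2 2 y = χo n * (E (n-1) y - E n y) := fun y => (ih (x := y)).2
    constructor
    · -- R (n+1) 2 1 x = ∫ R n 2 2
      have : R (n+1) 2 1 x = ∫ v in (0:ℝ)..x, R n 2 2 v := by simp [R]
      rw [this]
      simp only [ih2]
      rw [intervalIntegral.integral_const_mul, intervalIntegral.integral_sub
        (intervalIntegrable_E _ _) (intervalIntegrable_E _ _), integral_E, integral_E]
      have hχ : χe (n+1) = χo n := by
        rcases Nat.even_or_odd n with h | h
        · simp [χe, χo, Nat.even_add_one, h, Nat.not_odd_iff_even.2 h]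
        · have h1 : 2 ≤ n + 1 := by rw [Nat.odd_iff] at h; omega
          simp [χe, χo, Nat.even_add_one, Nat.not_even_iff_odd.2 h, h, h1]
      rcases n with _ | m
      · simp [χo, χe]
      · rw [hχ]
        norm_num
    · -- R (n+1) 2 2 x = (1-x) * R n 1 1 x + ∫ R n 2 1
      have : R (n+1) 2 2 x = (1-x) * R n 1 1 x + ∫ v in (0:ℝ)..x, R n 2 1 v := by
        simp [R]
      rw [this, R_one]
      simp only [ih1]
      rw [intervalIntegral.integral_const_mul, intervalIntegral.integral_sub
        (intervalIntegrable_E _ _) (intervalIntegrable_E _ _), integral_E, integral_E]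
      rcases n with _ | m
      · simp [χo, χe, E]
      · have hχ : χo (m+2) = χe (m+1) := by
          rcases Nat.even_or_odd m with h | h
          · rw [Nat.even_iff] at h
            have h1 : ¬ Odd (m+2) := by rw [Nat.odd_iff]; omega
            have h2 : ¬ Even (m+1) := by rw [Nat.even_iff]; omega
            simp [χe, χo, h1, h2]
          · rw [Nat.odd_iff] at h
            have h1 : Odd (m+2) := by rw [Nat.odd_iff]; omega
            have h2 : Even (m+1) := by rw [Nat.even_iff]; omega
            have h3 : 2 ≤ m + 1 := by omega
            simp [χe, χo, h1, h2, h3]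
        rw [hχ]
        norm_num

/-- coefficient sequences (a1,a2,a3,m1,m2,m3) -/
noncomputable def co : ℕ → ℝ × ℝ × ℝ × ℝ × ℝ × ℝ
  | 0 => (0, 0, 0, 0, 0, 0)
  | n + 1 =>
    let c := co n
    (c.2.2.1, c.1 + χe n, c.2.1 + χo n,
     c.2.2.2.2.2, c.2.2.2.1 + ((n:ℝ)+1) * χe n, c.2.2.2.2.1 + ((n:ℝ)+1) * χo n)

noncomputable def a1 (n : ℕ) : ℝ := (co n).1
noncomputable def a2 (n : ℕ) : ℝ := (co n).2.1
noncomputable def a3 (n : ℕ) : ℝ := (co n).2.2.1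
noncomputable def m1 (n : ℕ) : ℝ := (co n).2.2.2.1
noncomputable def m2 (n : ℕ) : ℝ := (co n).2.2.2.2.1
noncomputable def m3 (n : ℕ) : ℝ := (co n).2.2.2.2.2

@[simp] lemma a1_zero : a1 0 = 0 := rfl
@[simp] lemma a2_zero : a2 0 = 0 := rfl
@[simp] lemma a3_zero : a3 0 = 0 := rfl
@[simp] lemma m1_zero : m1 0 = 0 := rfl
@[simp] lemma m2_zero : m2 0 = 0 := rfl
@[simp] lemma m3_zero : m3 0 = 0 := rfl
lemma a1_succ (n : ℕ) : a1 (n+1) = a3 n := rfl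
lemma a2_succ (n : ℕ) : a2 (n+1) = a1 n + χe n := rfl
lemma a3_succ (n : ℕ) : a3 (n+1) = a2 n + χo n := rfl
lemma m1_succ (n : ℕ) : m1 (n+1) = m3 n := rfl
lemma m2_succ (n : ℕ) : m2 (n+1) = m1 n + ((n:ℝ)+1) * χe n := rfl
lemma m3_succ (n : ℕ) : m3 (n+1) = m2 n + ((n:ℝ)+1) * χo n := rfl

lemma integral_tri (a b c : ℝ) (i j k : ℕ) (x : ℝ) :
    (∫ v in (0:ℝ)..x, (a * E i v - b * E j v + c * E k v)) =
      a * E (i+1) x - b * E (j+1) x + c * E (k+1) x := by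
  rw [intervalIntegral.integral_add (((intervalIntegrable_E i x).const_mul a).sub
      ((intervalIntegrable_E j x).const_mul b)) ((intervalIntegrable_E k x).const_mul c),
    intervalIntegral.integral_sub ((intervalIntegrable_E i x).const_mul a)
      ((intervalIntegrable_E j x).const_mul b),
    intervalIntegral.integral_const_mul, intervalIntegral.integral_const_mul,
    intervalIntegral.integral_const_mul, integral_E, integral_E, integral_E]

lemma R_three (n : ℕ) (x : ℝ) :
    R n 3 1 x = a1 n * E (n-2) x - m1 n * E (n-1) x + m1 n * E n x ∧
    R n 3 2 x = a2 n * E (n-2) x - m2 n * E (n-1) x + m2 n * E n x ∧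
    R n 3 3 x = a3 n * E (n-2) x - m3 n * E (n-1) x + m3 n * E n x := by
  induction n generalizing x with
  | zero => simp [R]
  | succ n ih =>
    have ih1 : ∀ y, R n 3 1 y = a1 n * E (n-2) y - m1 n * E (n-1) y + m1 n * E n y :=
      fun y => (ih (x := y)).1
    have ih2 : ∀ y, R n 3 2 y = a2 n * E (n-2) y - m2 n * E (n-1) y + m2 n * E n y :=
      fun y => (ih (x := y)).2.1
    have ih3 : ∀ y, R n 3 3 y = a3 n * E (n-2) y - m3 n * E (n-1) y + m3 n * E n y :=
      fun y => (ih (x := y)).2.2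
    have e1 : R (n+1) 3 1 x = ∫ v in (0:ℝ)..x, R n 3 3 v := by simp [R]
    have e2 : R (n+1) 3 2 x = (1-x) * R n 2 1 x + ∫ v in (0:ℝ)..x, R n 3 1 v := by simp [R]
    have e3 : R (n+1) 3 3 x = (1-x) * R n 2 2 x + ∫ v in (0:ℝ)..x, R n 3 2 v := by simp [R]
    rcases n with _ | _ | m
    · refine ⟨?_, ?_, ?_⟩ <;>
        simp [e1, e2, e3, R, a1_succ, a2_succ, a3_succ, m1_succ, m2_succ, m3_succ, χe, χo]
    · -- n = 1
      refine ⟨?_, ?_, ?_⟩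
      · rw [e1]; simp only [ih3]
        rw [integral_tri]
        simp [a1_succ, m1_succ, a3_succ, m3_succ, χe, χo, E]
      · rw [e2, (R_two 1 x).1]; simp only [ih1]
        rw [integral_tri]
        simp [a2_succ, m2_succ, a1_succ, m1_succ, χe, χo, E]
      · rw [e3, (R_two 1 x).2]; simp only [ih2]
        rw [integral_tri]
        simp only [a3_succ, m3_succ, a2_succ, m2_succ, χe, χo]
        norm_num [E]
        ring
    · -- n = m + 2
      set n := m + 2 with hn
      have hn2 : n - 2 + 1 = n - 1 := by omega
      have hn1 : n - 1 + 1 = n := by omega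
      refine ⟨?_, ?_, ?_⟩
      · rw [e1]; simp only [ih3]
        rw [integral_tri, hn2, hn1]
        simp only [show n+1-2 = n-1 from by omega, show n+1-1 = n from by omega]
        rw [a1_succ, m1_succ]
      · rw [e2, (R_two n x).1]; simp only [ih1]
        rw [integral_tri, hn2, hn1]
        simp only [show n+1-2 = n-1 from by omega, show n+1-1 = n from by omega]
        rw [a2_succ, m2_succ]
        have hx1 : x * E (n-1) x = (n:ℝ) * E n x := by
          have := x_mul_E (n-1) x
          rw [hn1] at this
          rw [this]
          congr 1
          push_cast [hn]
          ring
        have hx2 : x * E n x = ((n:ℝ)+1) * E (n+1) x := x_mul_E n x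
        have expand : (1-x) * (χe n * (E (n-1) x - E n x)) =
            χe n * E (n-1) x - χe n * ((n:ℝ)+1) * E n x + χe n * ((n:ℝ)+1) * E (n+1) x := by
          have : (1-x) * (χe n * (E (n-1) x - E n x)) =
              χe n * (E (n-1) x - E n x - x * E (n-1) x + x * E n x) := by ring
          rw [this, hx1, hx2]
          ring
        rw [expand]
        ring
      · rw [e3, (R_two n x).2]; simp only [ih2]
        rw [integral_tri, hn2, hn1]
        simp only [show n+1-2 = n-1 from by omega, show n+1-1 = n from by omega]
        rw [a3_succ, m3_succ]
        have hx1 : x * E (n-1) x = (n:ℝ) * E n x := by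
          have := x_mul_E (n-1) x
          rw [hn1] at this
          rw [this]
          congr 1
          push_cast [hn]
          ring
        have hx2 : x * E n x = ((n:ℝ)+1) * E (n+1) x := x_mul_E n x
        have expand : (1-x) * (χo n * (E (n-1) x - E n x)) =
            χo n * E (n-1) x - χo n * ((n:ℝ)+1) * E n x + χo n * ((n:ℝ)+1) * E (n+1) x := by
          have : (1-x) * (χo n * (E (n-1) x - E n x)) =
              χo n * (E (n-1) x - E n x - x * E (n-1) x + x * E n x) := by ring
          rw [this, hx1, hx2]
          ring
        rw [expand]
        ring

lemma chi_bounds (n : ℕ) : |χe n| ≤ 1 ∧ |χo n| ≤ 1 := by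
  unfold χe χo
  constructor <;> split <;> norm_num

lemma co_bound (n : ℕ) :
    |a1 n| ≤ n ∧ |a2 n| ≤ n ∧ |a3 n| ≤ n ∧
    |m1 n| ≤ (n:ℝ)^2 ∧ |m2 n| ≤ (n:ℝ)^2 ∧ |m3 n| ≤ (n:ℝ)^2 := by
  induction n with
  | zero => norm_num
  | succ n ih =>
    obtain ⟨h1, h2, h3, h4, h5, h6⟩ := ih
    obtain ⟨he, ho⟩ := chi_bounds n
    have hn : (0:ℝ) ≤ n := Nat.cast_nonneg n
    push_cast
    refine ⟨?_, ?_, ?_, ?_, ?_, ?_⟩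
    · rw [a1_succ]; nlinarith
    · rw [a2_succ]; calc |a1 n + χe n| ≤ |a1 n| + |χe n| := abs_add_le _ _
        _ ≤ (n:ℝ) + 1 := by nlinarith
    · rw [a3_succ]; calc |a2 n + χo n| ≤ |a2 n| + |χo n| := abs_add_le _ _
        _ ≤ (n:ℝ) + 1 := by nlinarith
    · rw [m1_succ]; nlinarith
    · rw [m2_succ]
      calc |m1 n + ((n:ℝ)+1) * χe n| ≤ |m1 n| + |((n:ℝ)+1) * χe n| := abs_add_le _ _
        _ ≤ (n:ℝ)^2 + ((n:ℝ)+1) * 1 := by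
            have : |((n:ℝ)+1) * χe n| = ((n:ℝ)+1) * |χe n| := by
              rw [abs_mul, abs_of_nonneg (by linarith : (0:ℝ) ≤ (n:ℝ)+1)]
            nlinarith
        _ ≤ ((n:ℝ) + 1)^2 := by nlinarith
    · rw [m3_succ]
      calc |m2 n + ((n:ℝ)+1) * χo n| ≤ |m2 n| + |((n:ℝ)+1) * χo n| := abs_add_le _ _
        _ ≤ (n:ℝ)^2 + ((n:ℝ)+1) * 1 := by
            have : |((n:ℝ)+1) * χo n| = ((n:ℝ)+1) * |χo n| := by
              rw [abs_mul, abs_of_nonneg (by linarith : (0:ℝ) ≤ (n:ℝ)+1)]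
            nlinarith
        _ ≤ ((n:ℝ) + 1)^2 := by nlinarith

lemma nat_sq_le (n : ℕ) : ((n:ℝ)+3)^2 ≤ 36 * 2^n := by
  induction n with
  | zero => norm_num
  | succ n ih =>
    have h : (n:ℝ) + 1 ≤ 2^n := by
      have h2 : (n:ℕ) < 2^n := Nat.lt_two_pow_self
      calc (n:ℝ) + 1 = ((n+1 : ℕ) : ℝ) := by push_cast; ring
        _ ≤ ((2^n : ℕ) : ℝ) := by exact_mod_cast h2
        _ = 2^n := by push_cast; ring
    have hn : (0:ℝ) ≤ (n:ℝ) := Nat.cast_nonneg n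
    have key : (2*(n:ℝ)+7) ≤ 36 * 2^n := by linarith
    push_cast
    calc ((n:ℝ)+1+3)^2 = ((n:ℝ)+3)^2 + (2*(n:ℝ)+7) := by ring
      _ ≤ 36*2^n + 36*2^n := by linarith
      _ = 36*2^(n+1) := by ring

/-- master summability lemma -/
lemma summable_master (x : ℝ) (c : ℕ → ℝ) (hc : ∀ n, |c n| ≤ ((n:ℝ)+3)^2) :
    Summable (fun n : ℕ => c n * E n x) := by
  apply Summable.of_norm_bounded (g := fun n => 36 * ((2*|x|)^n / n.factorial))
  · exact (Real.summable_pow_div_factorial (2*|x|)).mul_left 36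
  · intro n
    have h1 : ‖c n * E n x‖ ≤ ((n:ℝ)+3)^2 * (|x|^n / n.factorial) := by
      rw [norm_mul, Real.norm_eq_abs, Real.norm_eq_abs]
      have hE : |E n x| = |x|^n / n.factorial := by
        rw [E, abs_div, abs_pow, Nat.abs_cast]
      rw [hE]
      apply mul_le_mul_of_nonneg_right (hc n) (by positivity)
    refine h1.trans ?_
    rw [mul_pow]
    calc ((n:ℝ)+3)^2 * (|x|^n / n.factorial) ≤ (36*2^n) * (|x|^n / n.factorial) :=
          mul_le_mul_of_nonneg_right (nat_sq_le n) (by positivity)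
      _ = 36 * (2^n * |x|^n / n.factorial) := by ring

noncomputable def tt (j : ℕ) : ℝ := if j % 3 = 0 then 0 else if j % 3 = 1 then -1 else 1
noncomputable def uu (j : ℕ) : ℝ := if j % 3 = 0 then 1 else if j % 3 = 1 then 0 else -1
noncomputable def ww (j : ℕ) : ℝ := if j % 3 = 0 then -1 else if j % 3 = 1 then 1 else 0

lemma tt_succ (j : ℕ) : tt (j+1) = ww j := by
  have h : j % 3 = 0 ∨ j % 3 = 1 ∨ j % 3 = 2 := by omega
  rcases h with h | h | h <;>
    simp [tt, ww, h, show (j+1) % 3 = (j%3+1)%3 from by omega]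

lemma uu_succ (j : ℕ) : uu (j+1) = tt j := by
  have h : j % 3 = 0 ∨ j % 3 = 1 ∨ j % 3 = 2 := by omega
  rcases h with h | h | h <;>
    simp [uu, tt, h, show (j+1) % 3 = (j%3+1)%3 from by omega]

lemma ww_succ (j : ℕ) : ww (j+1) = uu j := by
  have h : j % 3 = 0 ∨ j % 3 = 1 ∨ j % 3 = 2 := by omega
  rcases h with h | h | h <;>
    simp [ww, uu, h, show (j+1) % 3 = (j%3+1)%3 from by omega]

lemma cC (j : ℕ) :
    (a1 (j+2) - m1 (j+1) + m1 j
        = (-1:ℝ)^(j+1) * ((j:ℝ)+1) + tt j + (if j = 0 then 1 else 0)) ∧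
    (a2 (j+2) - m2 (j+1) + m2 j = -(-1:ℝ)^j + uu j) ∧
    (a3 (j+2) - m3 (j+1) + m3 j = (-1:ℝ)^j * ((j:ℝ)+2) + ww j) := by
  induction j with
  | zero =>
    refine ⟨?_, ?_, ?_⟩ <;>
      norm_num [a1_succ, a2_succ, a3_succ, m1_succ, m2_succ, m3_succ, χe, χo, tt, uu, ww]
  | succ j ih =>
    obtain ⟨ih1, ih2, ih3⟩ := ih
    have hpow : (-1:ℝ)^(j+1) = -(-1:ℝ)^j := by rw [pow_succ]; ring
    have hpow2 : (-1:ℝ)^(j+2) = (-1:ℝ)^j := by rw [pow_succ, pow_succ]; ring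
    refine ⟨?_, ?_, ?_⟩
    · -- k = 1
      have lhs : a1 (j+3) - m1 (j+2) + m1 (j+1)
          = a3 (j+2) - m3 (j+1) + m3 j := by
        rw [show j+3 = (j+2)+1 from rfl, a1_succ, m1_succ, m1_succ]
      rw [show j+1+2 = j+3 from rfl, lhs, ih3, tt_succ]
      simp only [show ¬ (j+1 = 0) from by omega, if_false]
      push_cast
      rw [show j+1+1 = j+2 from rfl, hpow2]
      ring
    · -- k = 2
      have lhs : a2 (j+3) - m2 (j+2) + m2 (j+1)
          = (a1 (j+2) - m1 (j+1) + m1 j)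
            + χe (j+2) - ((j:ℝ)+2) * χe (j+1) + ((j:ℝ)+1) * χe j := by
        rw [show j+3 = (j+2)+1 from rfl, a2_succ, m2_succ, m2_succ]
        push_cast
        ring
      rw [show j+1+2 = j+3 from rfl, lhs, ih1, uu_succ, hpow]
      rcases Nat.even_or_odd j with hj | hj
      · have he2 : χe (j+2) = 1 := by
          rw [Nat.even_iff] at hj; simp [χe, Nat.even_iff]; omega
        have he1 : χe (j+1) = 0 := by
          rw [Nat.even_iff] at hj; simp [χe, Nat.even_iff]; omega
        rcases Nat.eq_zero_or_pos j with h0 | h0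
        · subst h0
          norm_num [he2, he1, χe, tt, uu, hj.neg_one_pow]
        · have he0 : χe j = 1 := by
            rw [Nat.even_iff] at hj; simp [χe, Nat.even_iff]; omega
          simp only [show ¬ (j = 0) from by omega, if_false, he2, he1, he0,
            hj.neg_one_pow]
          ring
      · have he2 : χe (j+2) = 0 := by
          rw [Nat.odd_iff] at hj; simp [χe, Nat.even_iff]; omega
        have he1 : χe (j+1) = 1 := by
          rw [Nat.odd_iff] at hj; simp [χe, Nat.even_iff]; omega
        have he0 : χe j = 0 := by
          rw [Nat.odd_iff] at hj; simp [χe, Nat.even_iff]; omega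
        simp only [show ¬ (j = 0) from by rw [Nat.odd_iff] at hj; omega, if_false,
          he2, he1, he0, hj.neg_one_pow]
        ring
    · -- k = 3
      have lhs : a3 (j+3) - m3 (j+2) + m3 (j+1)
          = (a2 (j+2) - m2 (j+1) + m2 j)
            + χo (j+2) - ((j:ℝ)+2) * χo (j+1) + ((j:ℝ)+1) * χo j := by
        rw [show j+3 = (j+2)+1 from rfl, a3_succ, m3_succ, m3_succ]
        push_cast
        ring
      rw [show j+1+2 = j+3 from rfl, lhs, ih2, ww_succ, hpow]
      rcases Nat.even_or_odd j with hj | hj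
      · have ho2 : χo (j+2) = 0 := by
          rw [Nat.even_iff] at hj; simp [χo, Nat.odd_iff]; omega
        have ho1 : χo (j+1) = 1 := by
          rw [Nat.even_iff] at hj; simp [χo, Nat.odd_iff]; omega
        have ho0 : χo j = 0 := by
          rw [Nat.even_iff] at hj; simp [χo, Nat.odd_iff]; omega
        simp only [ho2, ho1, ho0, hj.neg_one_pow]
        push_cast
        ring
      · have ho2 : χo (j+2) = 1 := by
          rw [Nat.odd_iff] at hj; simp [χo, Nat.odd_iff]; omega
        have ho1 : χo (j+1) = 0 := by
          rw [Nat.odd_iff] at hj; simp [χo, Nat.odd_iff]; omega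
        have ho0 : χo j = 1 := by
          rw [Nat.odd_iff] at hj; simp [χo, Nat.odd_iff]; omega
        simp only [ho2, ho1, ho0, hj.neg_one_pow]
        push_cast
        ring

noncomputable def ω : ℂ := ⟨-1/2, Real.sqrt 3 / 2⟩

@[simp] lemma ω_re : ω.re = -1/2 := rfl
@[simp] lemma ω_im : ω.im = Real.sqrt 3 / 2 := rfl

lemma sqrt3_sq : Real.sqrt 3 * Real.sqrt 3 = 3 := Real.mul_self_sqrt (by norm_num)
lemma sqrt3_pos : (0:ℝ) < Real.sqrt 3 := Real.sqrt_pos.mpr (by norm_num)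

lemma ω_sq_re : (ω^2).re = -1/2 := by
  rw [sq, Complex.mul_re]; simp; nlinarith [sqrt3_sq]
lemma ω_sq_im : (ω^2).im = -(Real.sqrt 3 / 2) := by
  rw [sq, Complex.mul_im]; simp; ring
lemma ω_cube : ω^3 = 1 := by
  have h : ω^3 = ω^2 * ω := by ring
  rw [h]
  apply Complex.ext
  · rw [Complex.mul_re, ω_sq_re, ω_sq_im]; simp; nlinarith [sqrt3_sq]
  · rw [Complex.mul_im, ω_sq_re, ω_sq_im]; simp; ring

lemma ω_pow (j : ℕ) : ω^j = ω^(j % 3) := by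
  conv_lhs => rw [← Nat.div_add_mod j 3]
  rw [pow_add, pow_mul, ω_cube, one_pow, one_mul]

lemma tt_eq (j : ℕ) : tt j = -(2/Real.sqrt 3) * (ω^j).im := by
  rw [ω_pow]
  have h : j % 3 = 0 ∨ j % 3 = 1 ∨ j % 3 = 2 := by omega
  have hne : Real.sqrt 3 ≠ 0 := ne_of_gt sqrt3_pos
  rcases h with h | h | h <;> rw [h] <;> simp [tt, h, ω_sq_im] <;> field_simp

lemma uu_eq (j : ℕ) : uu j = (ω^j).re + (1/Real.sqrt 3) * (ω^j).im := by
  rw [ω_pow]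
  have h : j % 3 = 0 ∨ j % 3 = 1 ∨ j % 3 = 2 := by omega
  have hne : Real.sqrt 3 ≠ 0 := ne_of_gt sqrt3_pos
  rcases h with h | h | h <;> rw [h] <;>
    simp [uu, h, ω_sq_im, ω_sq_re] <;> field_simp <;> norm_num

lemma ww_eq (j : ℕ) : ww j = (1/Real.sqrt 3) * (ω^j).im - (ω^j).re := by
  rw [ω_pow]
  have h : j % 3 = 0 ∨ j % 3 = 1 ∨ j % 3 = 2 := by omega
  have hne : Real.sqrt 3 ≠ 0 := ne_of_gt sqrt3_pos
  rcases h with h | h | h <;> rw [h] <;>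
    simp [ww, h, ω_sq_im, ω_sq_re] <;> field_simp <;> norm_num

/-! ### series machinery -/

lemma Sexp (y : ℝ) : Summable (fun n : ℕ => E n y) := by
  have := summable_master y (fun _ => 1) (fun n => by
    rw [abs_one]; nlinarith [Nat.cast_nonneg (α := ℝ) n])
  simpa using this

lemma tsum_E (y : ℝ) : ∑' n : ℕ, E n y = Real.exp y := by
  rw [Real.exp_eq_exp_ℝ, NormedSpace.exp_eq_tsum_div]
  rfl

lemma Snexp (y : ℝ) : Summable (fun n : ℕ => (n:ℝ) * E n y) := by
  apply summable_master y (fun n => (n:ℝ))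
  intro n
  rw [Nat.abs_cast]
  nlinarith [Nat.cast_nonneg (α := ℝ) n]

lemma tsum_nE (y : ℝ) : ∑' n : ℕ, (n:ℝ) * E n y = y * Real.exp y := by
  rw [Summable.tsum_eq_zero_add (Snexp y)]
  have h : ∀ n : ℕ, ((n+1 : ℕ):ℝ) * E (n+1) y = y * E n y := by
    intro n
    push_cast
    rw [← x_mul_E n y]
  simp only [h]
  rw [tsum_mul_left, tsum_E]
  simp

lemma SC (z : ℂ) : Summable (fun n : ℕ => z^n / n.factorial) :=
  NormedSpace.expSeries_div_summable z

lemma tsum_expC (z : ℂ) : ∑' n : ℕ, z^n / n.factorial = Complex.exp z := by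
  rw [Complex.exp_eq_exp_ℂ, NormedSpace.exp_eq_tsum_div]

lemma abs_ω : ‖ω‖ = 1 := by
  rw [Complex.norm_def, Complex.normSq_apply, ω_re, ω_im]
  rw [show (-1/2 * (-1/2) + Real.sqrt 3 / 2 * (Real.sqrt 3 / 2)) = 1 by nlinarith [sqrt3_sq]]
  exact Real.sqrt_one

lemma ω_pow_im_le (n : ℕ) : |(ω^n).im| ≤ 1 := by
  calc |(ω^n).im| ≤ ‖ω^n‖ := Complex.abs_im_le_norm _
    _ = 1 := by rw [norm_pow, abs_ω, one_pow]

lemma ω_pow_re_le (n : ℕ) : |(ω^n).re| ≤ 1 := by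
  calc |(ω^n).re| ≤ ‖ω^n‖ := Complex.abs_re_le_norm _
    _ = 1 := by rw [norm_pow, abs_ω, one_pow]

lemma Sim (x : ℝ) : Summable (fun n : ℕ => (ω^n).im * E n x) :=
  summable_master x _ (fun n => le_trans (ω_pow_im_le n)
    (by nlinarith [Nat.cast_nonneg (α := ℝ) n]))

lemma Sre (x : ℝ) : Summable (fun n : ℕ => (ω^n).re * E n x) :=
  summable_master x _ (fun n => le_trans (ω_pow_re_le n)
    (by nlinarith [Nat.cast_nonneg (α := ℝ) n]))

lemma term_im (x : ℝ) (n : ℕ) :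
    (ω^n).im * E n x = (((ω * x)^n / n.factorial : ℂ)).im := by
  rw [mul_pow, ← Complex.ofReal_pow]
  rw [show ((n.factorial : ℕ) : ℂ) = ((n.factorial : ℝ) : ℂ) by push_cast; ring]
  rw [div_eq_mul_inv, ← Complex.ofReal_inv, mul_assoc, ← Complex.ofReal_mul,
    Complex.mul_im, Complex.ofReal_re, Complex.ofReal_im]
  rw [E, div_eq_mul_inv]
  ring

lemma term_re (x : ℝ) (n : ℕ) :
    (ω^n).re * E n x = (((ω * x)^n / n.factorial : ℂ)).re := by
  rw [mul_pow, ← Complex.ofReal_pow]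
  rw [show ((n.factorial : ℕ) : ℂ) = ((n.factorial : ℝ) : ℂ) by push_cast; ring]
  rw [div_eq_mul_inv, ← Complex.ofReal_inv, mul_assoc, ← Complex.ofReal_mul,
    Complex.mul_re, Complex.ofReal_re, Complex.ofReal_im]
  rw [E, div_eq_mul_inv]
  ring

lemma ωx_re (x : ℝ) : (ω * x).re = -x/2 := by
  rw [Complex.mul_re, Complex.ofReal_re, Complex.ofReal_im]
  simp; ring

lemma ωx_im (x : ℝ) : (ω * x).im = Real.sqrt 3 * x / 2 := by
  rw [Complex.mul_im, Complex.ofReal_re, Complex.ofReal_im]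
  simp; ring

lemma im_series (x : ℝ) :
    ∑' n : ℕ, (ω^n).im * E n x = Real.exp (-x/2) * Real.sin (Real.sqrt 3 * x / 2) := by
  calc ∑' n : ℕ, (ω^n).im * E n x
      = ∑' n : ℕ, (((ω * x)^n / n.factorial : ℂ)).im := tsum_congr (term_im x)
    _ = (∑' n : ℕ, ((ω * x)^n / n.factorial : ℂ)).im := by
        have := Complex.imCLM.map_tsum (SC (ω * x))
        simpa using this.symm
    _ = (Complex.exp (ω * x)).im := by rw [tsum_expC]
    _ = _ := by rw [Complex.exp_im, ωx_re, ωx_im]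

lemma re_series (x : ℝ) :
    ∑' n : ℕ, (ω^n).re * E n x = Real.exp (-x/2) * Real.cos (Real.sqrt 3 * x / 2) := by
  calc ∑' n : ℕ, (ω^n).re * E n x
      = ∑' n : ℕ, (((ω * x)^n / n.factorial : ℂ)).re := tsum_congr (term_re x)
    _ = (∑' n : ℕ, ((ω * x)^n / n.factorial : ℂ)).re := by
        have := Complex.reCLM.map_tsum (SC (ω * x))
        simpa using this.symm
    _ = (Complex.exp (ω * x)).re := by rw [tsum_expC]
    _ = _ := by rw [Complex.exp_re, ωx_re, ωx_im]

/-! ### regrouping the sum -/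

lemma regroup (x : ℝ) (aa mm : ℕ → ℝ)
    (ha : ∀ n, |aa n| ≤ (n:ℝ)) (hm : ∀ n, |mm n| ≤ (n:ℝ)^2)
    (ha0 : aa 0 = 0) (ha1 : aa 1 = 0) (hm0 : mm 0 = 0) :
    ∑' n : ℕ, (aa n * E (n-2) x - mm n * E (n-1) x + mm n * E n x)
      = ∑' n : ℕ, ((aa (n+2) - mm (n+1) + mm n) * E n x) := by
  have S1 : Summable (fun n : ℕ => aa (n+2) * E n x) := by
    apply summable_master x; intro n
    calc |aa (n+2)| ≤ ((n+2:ℕ):ℝ) := ha (n+2)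
      _ ≤ ((n:ℝ)+3)^2 := by push_cast; nlinarith [Nat.cast_nonneg (α := ℝ) n]
  have S2 : Summable (fun n : ℕ => mm (n+1) * E n x) := by
    apply summable_master x; intro n
    calc |mm (n+1)| ≤ ((n+1:ℕ):ℝ)^2 := hm (n+1)
      _ ≤ ((n:ℝ)+3)^2 := by push_cast; nlinarith [Nat.cast_nonneg (α := ℝ) n]
  have S3 : Summable (fun n : ℕ => mm n * E n x) := by
    apply summable_master x; intro n
    calc |mm n| ≤ ((n:ℕ):ℝ)^2 := hm n
      _ ≤ ((n:ℝ)+3)^2 := by nlinarith [Nat.cast_nonneg (α := ℝ) n]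
  have T1 : Summable (fun n : ℕ => aa n * E (n-2) x) :=
    (summable_nat_add_iff (f := fun n => aa n * E (n-2) x) 2).1 (by simpa using S1)
  have T2 : Summable (fun n : ℕ => mm n * E (n-1) x) :=
    (summable_nat_add_iff (f := fun n => mm n * E (n-1) x) 1).1 (by simpa using S2)
  have E1 : ∑' n : ℕ, aa n * E (n-2) x = ∑' n : ℕ, aa (n+2) * E n x := by
    rw [← Summable.sum_add_tsum_nat_add 2 T1]
    simp [Finset.sum_range_succ, ha0, ha1]
  have E2 : ∑' n : ℕ, mm n * E (n-1) x = ∑' n : ℕ, mm (n+1) * E n x := by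
    rw [← Summable.sum_add_tsum_nat_add 1 T2]
    simp [hm0]
  calc ∑' n : ℕ, (aa n * E (n-2) x - mm n * E (n-1) x + mm n * E n x)
      = (∑' n : ℕ, (aa n * E (n-2) x - mm n * E (n-1) x)) + ∑' n : ℕ, mm n * E n x :=
        Summable.tsum_add (T1.sub T2) S3
    _ = (∑' n : ℕ, aa n * E (n-2) x) - (∑' n : ℕ, mm n * E (n-1) x)
          + ∑' n : ℕ, mm n * E n x := by rw [Summable.tsum_sub T1 T2]
    _ = (∑' n : ℕ, aa (n+2) * E n x) - (∑' n : ℕ, mm (n+1) * E n x)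
          + ∑' n : ℕ, mm n * E n x := by rw [E1, E2]
    _ = ∑' n : ℕ, (aa (n+2) * E n x - mm (n+1) * E n x) + ∑' n : ℕ, mm n * E n x := by
        rw [Summable.tsum_sub S1 S2]
    _ = ∑' n : ℕ, ((aa (n+2) * E n x - mm (n+1) * E n x) + mm n * E n x) := by
        rw [← Summable.tsum_add (S1.sub S2) S3]
    _ = _ := tsum_congr fun n => by ring

lemma E_neg (n : ℕ) (x : ℝ) : E n (-x) = (-1:ℝ)^n * E n x := by
  rw [E, E, neg_pow]
  ring

/-! ### the three formulas -/

lemma Stt (x : ℝ) : Summable (fun n : ℕ => tt n * E n x) := by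
  apply summable_master x; intro n
  have : |tt n| ≤ 1 := by unfold tt; split <;> norm_num; split <;> norm_num
  exact this.trans (by nlinarith [Nat.cast_nonneg (α := ℝ) n])

lemma Suu (x : ℝ) : Summable (fun n : ℕ => uu n * E n x) := by
  apply summable_master x; intro n
  have : |uu n| ≤ 1 := by unfold uu; split <;> norm_num; split <;> norm_num
  exact this.trans (by nlinarith [Nat.cast_nonneg (α := ℝ) n])

lemma Sww (x : ℝ) : Summable (fun n : ℕ => ww n * E n x) := by
  apply summable_master x; intro n
  have : |ww n| ≤ 1 := by unfold ww; split <;> norm_num; split <;> norm_num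
  exact this.trans (by nlinarith [Nat.cast_nonneg (α := ℝ) n])

lemma tsum_tt (x : ℝ) : ∑' n : ℕ, tt n * E n x
    = -(2/Real.sqrt 3) * (Real.exp (-x/2) * Real.sin (Real.sqrt 3 * x / 2)) := by
  have h : ∀ n : ℕ, tt n * E n x = (-(2/Real.sqrt 3)) * ((ω^n).im * E n x) := by
    intro n; rw [tt_eq]; ring
  rw [tsum_congr h, tsum_mul_left, im_series]

lemma tsum_uu (x : ℝ) : ∑' n : ℕ, uu n * E n x
    = Real.exp (-x/2) * Real.cos (Real.sqrt 3 * x / 2)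
      + (1/Real.sqrt 3) * (Real.exp (-x/2) * Real.sin (Real.sqrt 3 * x / 2)) := by
  have h : ∀ n : ℕ, uu n * E n x
      = (ω^n).re * E n x + (1/Real.sqrt 3) * ((ω^n).im * E n x) := by
    intro n; rw [uu_eq]; ring
  rw [tsum_congr h, Summable.tsum_add (Sre x) ((Sim x).mul_left _), tsum_mul_left,
    im_series, re_series]

lemma tsum_ww (x : ℝ) : ∑' n : ℕ, ww n * E n x
    = (1/Real.sqrt 3) * (Real.exp (-x/2) * Real.sin (Real.sqrt 3 * x / 2))
      - Real.exp (-x/2) * Real.cos (Real.sqrt 3 * x / 2) := by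
  have h : ∀ n : ℕ, ww n * E n x
      = (1/Real.sqrt 3) * ((ω^n).im * E n x) - (ω^n).re * E n x := by
    intro n; rw [ww_eq]; ring
  rw [tsum_congr h, Summable.tsum_sub ((Sim x).mul_left _) (Sre x), tsum_mul_left,
    im_series, re_series]

lemma P31_formula (x : ℝ) : P 3 1 x = 1 + (x - 1) * Real.exp (-x)
    - 2 / Real.sqrt 3 * Real.exp (-x / 2) * Real.sin (Real.sqrt 3 * x / 2) := by
  have key : P 3 1 x = ∑' n : ℕ, ((a1 (n+2) - m1 (n+1) + m1 n) * E n x) := by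
    rw [P, tsum_congr (fun n => (R_three n x).1)]
    exact regroup x a1 m1 (fun n => (co_bound n).1) (fun n => (co_bound n).2.2.2.1)
      a1_zero (by rw [a1_succ, a3_zero]) m1_zero
  rw [key, tsum_congr (fun n => by rw [(cC n).1])]
  have Salt : Summable (fun n : ℕ => ((-1:ℝ)^(n+1) * ((n:ℝ)+1)) * E n x) := by
    apply summable_master x; intro n
    rw [abs_mul, abs_pow, abs_neg, abs_one, one_pow, one_mul,
      abs_of_nonneg (by positivity : (0:ℝ) ≤ (n:ℝ)+1)]
    nlinarith [Nat.cast_nonneg (α := ℝ) n]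
  have Sind : Summable (fun n : ℕ => (if n = 0 then (1:ℝ) else 0) * E n x) := by
    apply summable_master x; intro n
    have : |(if n = 0 then (1:ℝ) else 0)| ≤ 1 := by split <;> norm_num
    exact this.trans (by nlinarith [Nat.cast_nonneg (α := ℝ) n])
  have split : ∑' n : ℕ, (((-1:ℝ)^(n+1) * ((n:ℝ)+1) + tt n + (if n = 0 then (1:ℝ) else 0)) * E n x)
      = (∑' n : ℕ, ((-1:ℝ)^(n+1) * ((n:ℝ)+1)) * E n x) + (∑' n : ℕ, tt n * E n x)
        + ∑' n : ℕ, (if n = 0 then (1:ℝ) else 0) * E n x := by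
    rw [← Summable.tsum_add Salt (Stt x), ← Summable.tsum_add (Salt.add (Stt x)) Sind]
    exact tsum_congr fun n => by ring
  rw [split]
  have e1 : ∑' n : ℕ, ((-1:ℝ)^(n+1) * ((n:ℝ)+1)) * E n x = (x - 1) * Real.exp (-x) := by
    have h : ∀ n : ℕ, ((-1:ℝ)^(n+1) * ((n:ℝ)+1)) * E n x
        = -((n:ℝ) * E n (-x)) - E n (-x) := by
      intro n
      rw [E_neg, pow_succ]
      ring
    rw [tsum_congr h, Summable.tsum_sub (Snexp (-x)).neg (Sexp (-x)), tsum_neg, tsum_nE, tsum_E]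
    ring
  have e3 : ∑' n : ℕ, (if n = 0 then (1:ℝ) else 0) * E n x = 1 := by
    have h : ∀ n : ℕ, (if n = 0 then (1:ℝ) else 0) * E n x
        = (if n = 0 then (1:ℝ) else 0) := by
      intro n
      rcases n with _ | n
      · simp [E_zero]
      · simp
    rw [tsum_congr h, tsum_ite_eq]
  rw [e1, e3, tsum_tt]
  ring

lemma P32_formula (x : ℝ) : P 3 2 x = -Real.exp (-x) + Real.exp (-x / 2) *
    (1 / Real.sqrt 3 * Real.sin (Real.sqrt 3 * x / 2) + Real.cos (Real.sqrt 3 * x / 2)) := by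
  have key : P 3 2 x = ∑' n : ℕ, ((a2 (n+2) - m2 (n+1) + m2 n) * E n x) := by
    rw [P, tsum_congr (fun n => (R_three n x).2.1)]
    exact regroup x a2 m2 (fun n => (co_bound n).2.1) (fun n => (co_bound n).2.2.2.2.1)
      a2_zero (by rw [a2_succ, a1_zero]; simp [χe]) m2_zero
  rw [key, tsum_congr (fun n => by rw [(cC n).2.1])]
  have Salt : Summable (fun n : ℕ => (-(-1:ℝ)^n) * E n x) := by
    apply summable_master x; intro n
    rw [abs_neg, abs_pow, abs_neg, abs_one, one_pow]
    nlinarith [Nat.cast_nonneg (α := ℝ) n]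
  have split : ∑' n : ℕ, ((-(-1:ℝ)^n + uu n) * E n x)
      = (∑' n : ℕ, (-(-1:ℝ)^n) * E n x) + ∑' n : ℕ, uu n * E n x := by
    rw [← Summable.tsum_add Salt (Suu x)]
    exact tsum_congr fun n => by ring
  rw [split]
  have e1 : ∑' n : ℕ, (-(-1:ℝ)^n) * E n x = -Real.exp (-x) := by
    have h : ∀ n : ℕ, (-(-1:ℝ)^n) * E n x = -(E n (-x)) := by
      intro n; rw [E_neg]; ring
    rw [tsum_congr h, tsum_neg, tsum_E]
  rw [e1, tsum_uu]
  ring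

lemma P33_formula (x : ℝ) : P 3 3 x = (2 - x) * Real.exp (-x) + Real.exp (-x / 2) *
    (1 / Real.sqrt 3 * Real.sin (Real.sqrt 3 * x / 2) - Real.cos (Real.sqrt 3 * x / 2)) := by
  have key : P 3 3 x = ∑' n : ℕ, ((a3 (n+2) - m3 (n+1) + m3 n) * E n x) := by
    rw [P, tsum_congr (fun n => (R_three n x).2.2)]
    exact regroup x a3 m3 (fun n => (co_bound n).2.2.1) (fun n => (co_bound n).2.2.2.2.2)
      a3_zero (by rw [a3_succ, a2_zero]; simp [χo]) m3_zero
  rw [key, tsum_congr (fun n => by rw [(cC n).2.2])]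
  have Salt : Summable (fun n : ℕ => ((-1:ℝ)^n * ((n:ℝ)+2)) * E n x) := by
    apply summable_master x; intro n
    rw [abs_mul, abs_pow, abs_neg, abs_one, one_pow, one_mul,
      abs_of_nonneg (by positivity : (0:ℝ) ≤ (n:ℝ)+2)]
    nlinarith [Nat.cast_nonneg (α := ℝ) n]
  have split : ∑' n : ℕ, (((-1:ℝ)^n * ((n:ℝ)+2) + ww n) * E n x)
      = (∑' n : ℕ, ((-1:ℝ)^n * ((n:ℝ)+2)) * E n x) + ∑' n : ℕ, ww n * E n x := by
    rw [← Summable.tsum_add Salt (Sww x)]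
    exact tsum_congr fun n => by ring
  rw [split]
  have e1 : ∑' n : ℕ, ((-1:ℝ)^n * ((n:ℝ)+2)) * E n x = (2 - x) * Real.exp (-x) := by
    have h : ∀ n : ℕ, ((-1:ℝ)^n * ((n:ℝ)+2)) * E n x
        = (n:ℝ) * E n (-x) + 2 * E n (-x) := by
      intro n; rw [E_neg]; ring
    rw [tsum_congr h, Summable.tsum_add (Snexp (-x)) ((Sexp (-x)).mul_left 2), tsum_mul_left,
      tsum_nE, tsum_E]
    ring
  rw [e1, tsum_ww]
  ring


/-- Explicit formulas for the winning probabilities in the 3-player game, and the value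
`P_{3,1} = 1 − (2/√(3e))·sin(√3/2)`. -/
theorem P_three_players :
    (∀ x ∈ Set.Icc (0:ℝ) 1,
      P 3 1 x = 1 + (x - 1) * Real.exp (-x)
          - 2 / Real.sqrt 3 * Real.exp (-x / 2) * Real.sin (Real.sqrt 3 * x / 2) ∧
      P 3 2 x = -Real.exp (-x) + Real.exp (-x / 2) *
          (1 / Real.sqrt 3 * Real.sin (Real.sqrt 3 * x / 2) + Real.cos (Real.sqrt 3 * x / 2)) ∧
      P 3 3 x = (2 - x) * Real.exp (-x) + Real.exp (-x / 2) *
          (1 / Real.sqrt 3 * Real.sin (Real.sqrt 3 * x / 2) - Real.cos (Real.sqrt 3 * x / 2))) ∧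
    P 3 1 1 = 1 - 2 / Real.sqrt (3 * Real.exp 1) * Real.sin (Real.sqrt 3 / 2) := by
  constructor
  · exact fun x _ => ⟨P31_formula x, P32_formula x, P33_formula x⟩
  · rw [P31_formula 1]
    have hs : Real.sqrt (3 * Real.exp 1) = Real.sqrt 3 * Real.exp (1/2) := by
      rw [Real.sqrt_mul (by norm_num : (0:ℝ) ≤ 3)]
      congr 1
      rw [show Real.exp 1 = Real.exp (1/2) ^ 2 by
        rw [sq, ← Real.exp_add]; norm_num]
      exact Real.sqrt_sq (Real.exp_pos _).le
    rw [hs]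
    have h1 : Real.exp (-(1:ℝ)/2) = (Real.exp (1/2))⁻¹ := by
      rw [← Real.exp_neg]; norm_num
    have hne : Real.sqrt 3 ≠ 0 := ne_of_gt sqrt3_pos
    have hee : Real.exp (1/2) ≠ 0 := (Real.exp_pos _).ne'
    rw [show Real.sqrt 3 * 1 / 2 = Real.sqrt 3 / 2 by ring, h1]
    field_simp
    ring
end

section
/- For every integer p ≥ 2 and every integer k with 1 ≤ k ≤ p−1, P_{p,k} > P_{p,k+1}; that is, in a p-player dart game each player has a strictly greater probability of winning than the next player. -/
open MeasureTheory intervalIntegral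

lemma R_zero (p k : ℕ) (x : ℝ) : R 0 p k x = if p = 1 ∧ k = 1 then 1 else 0 := rfl

lemma R_succ (n p k : ℕ) (x : ℝ) :
    R (n + 1) p k x =
      if p ≤ 1 then 0
      else if k = 1 then ∫ v in (0:ℝ)..x, R n p p v
      else (1 - x) * R n (p - 1) (k - 1) x + ∫ v in (0:ℝ)..x, R n p (k - 1) v := rfl

lemma R_cont : ∀ n p k, Continuous (R n p k) := by
  intro n
  induction n with
  | zero =>
    intro p k
    have : R 0 p k = fun _ : ℝ => if p = 1 ∧ k = 1 then (1:ℝ) else 0 := rfl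
    rw [this]; exact continuous_const
  | succ n ih =>
    intro p k
    have h : R (n+1) p k = fun x =>
      if p ≤ 1 then 0
      else if k = 1 then ∫ v in (0:ℝ)..x, R n p p v
      else (1 - x) * R n (p - 1) (k - 1) x + ∫ v in (0:ℝ)..x, R n p (k - 1) v := rfl
    rw [h]
    by_cases hp : p ≤ 1
    · simp only [hp, if_true]; exact continuous_const
    · simp only [hp, if_false]
      by_cases hk : k = 1
      · simp only [hk, if_true]
        exact intervalIntegral.continuous_primitive
          (fun a b => (ih p p).intervalIntegrable a b) 0
      · simp only [hk, if_false]
        exact ((continuous_const.sub continuous_id).mul (ih (p-1) (k-1))).add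
          (intervalIntegral.continuous_primitive
            (fun a b => (ih p (k-1)).intervalIntegrable a b) 0)

lemma R_intble (n p k : ℕ) (a b : ℝ) : IntervalIntegrable (R n p k) volume a b :=
  (R_cont n p k).intervalIntegrable a b

lemma R_nonneg : ∀ n p k, ∀ x : ℝ, 0 ≤ x → x ≤ 1 → 0 ≤ R n p k x := by
  intro n
  induction n with
  | zero =>
    intro p k x _ _
    rw [R_zero]; split_ifs <;> norm_num
  | succ n ih =>
    intro p k x hx0 hx1
    rw [R_succ]
    by_cases hp : p ≤ 1
    · simp [hp]
    · simp only [hp, if_false]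
      have hint : ∀ k', 0 ≤ ∫ v in (0:ℝ)..x, R n p k' v := fun k' =>
        intervalIntegral.integral_nonneg hx0
          (fun u hu => ih p k' u hu.1 (le_trans hu.2 hx1))
      by_cases hk : k = 1
      · simp only [hk, if_true]; exact hint p
      · simp only [hk, if_false]
        have h1 : 0 ≤ (1 - x) * R n (p-1) (k-1) x :=
          mul_nonneg (by linarith) (ih (p-1) (k-1) x hx0 hx1)
        exact add_nonneg h1 (hint (k-1))
-- monotonicity helper for x^a/a!
lemma pow_fact_le {a b : ℕ} {x : ℝ} (hx0 : 0 ≤ x) (hx1 : x ≤ 1) (hab : b ≤ a) :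
    x ^ a / (Nat.factorial a : ℝ) ≤ x ^ b / (Nat.factorial b : ℝ) := by
  have h1 : x ^ a ≤ x ^ b := pow_le_pow_of_le_one hx0 hx1 hab
  have h2 : (Nat.factorial b : ℝ) ≤ (Nat.factorial a : ℝ) := by
    exact_mod_cast Nat.factorial_le hab
  have hb : (0:ℝ) < Nat.factorial b := by exact_mod_cast Nat.factorial_pos b
  have ha : (0:ℝ) < Nat.factorial a := by exact_mod_cast Nat.factorial_pos a
  gcongr

lemma R_le : ∀ n p k, ∀ x : ℝ, 0 ≤ x → x ≤ 1 →
    R n p k x ≤ 2 ^ n * x ^ (n + 1 - p) / (Nat.factorial (n + 1 - p) : ℝ) := by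
  intro n
  induction n with
  | zero =>
    intro p k x hx0 hx1
    rw [R_zero]
    split_ifs with h
    · obtain ⟨hp, -⟩ := h
      subst hp; simp
    · positivity
  | succ n ih =>
    intro p k x hx0 hx1
    rw [R_succ]
    by_cases hp : p ≤ 1
    · simp only [hp, if_true]; positivity
    · simp only [hp, if_false]
      push_neg at hp
      -- the integral branch bound
      have hIb : ∀ k', (∫ v in (0:ℝ)..x, R n p k' v) ≤
          2 ^ n * x ^ (n + 1 - p + 1) / (Nat.factorial (n + 1 - p + 1) : ℝ) := by
        intro k'
        have h1 : (∫ v in (0:ℝ)..x, R n p k' v) ≤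
            ∫ v in (0:ℝ)..x, 2 ^ n * v ^ (n + 1 - p) / (Nat.factorial (n + 1 - p) : ℝ) := by
          apply intervalIntegral.integral_mono_on hx0 (R_intble n p k' 0 x)
          · apply Continuous.intervalIntegrable; continuity
          · exact fun u hu => ih p k' u hu.1 (le_trans hu.2 hx1)
        have h2 : (∫ v in (0:ℝ)..x, 2 ^ n * v ^ (n + 1 - p) / (Nat.factorial (n + 1 - p) : ℝ))
            = 2 ^ n * x ^ (n + 1 - p + 1) / (Nat.factorial (n + 1 - p + 1) : ℝ) := by
          obtain ⟨m, hm⟩ : ∃ m, n + 1 - p = m := ⟨_, rfl⟩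
          rw [hm]
          have : ∀ v : ℝ, 2 ^ n * v ^ (n + 1 - p) / (Nat.factorial (n + 1 - p) : ℝ)
              = (2 ^ n / (Nat.factorial (n + 1 - p) : ℝ)) * v ^ (n + 1 - p) := by
            intro v; ring
          simp_rw [hm] at this
          simp_rw [this]
          rw [intervalIntegral.integral_const_mul, integral_pow]
          rw [Nat.factorial_succ, zero_pow (Nat.succ_ne_zero m)]
          push_cast
          rw [sub_zero]
          have hf0 : ((Nat.factorial m : ℕ) : ℝ) ≠ 0 :=
            Nat.cast_ne_zero.mpr (Nat.factorial_pos m).ne'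
          have hm0 : (1:ℝ) + (m:ℝ) ≠ 0 := by positivity
          field_simp
        exact h1.trans h2.le
      have hkey : (2:ℝ) ^ n * x ^ (n + 1 - p + 1) / (Nat.factorial (n + 1 - p + 1) : ℝ) ≤
          2 ^ n * x ^ (n + 2 - p) / (Nat.factorial (n + 2 - p) : ℝ) := by
        have h := pow_fact_le (a := n + 1 - p + 1) (b := n + 2 - p) hx0 hx1 (by omega)
        calc (2:ℝ) ^ n * x ^ (n + 1 - p + 1) / (Nat.factorial (n + 1 - p + 1) : ℝ)
            = 2 ^ n * (x ^ (n + 1 - p + 1) / (Nat.factorial (n + 1 - p + 1) : ℝ)) := by ring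
          _ ≤ 2 ^ n * (x ^ (n + 2 - p) / (Nat.factorial (n + 2 - p) : ℝ)) := by
              apply mul_le_mul_of_nonneg_left h (by positivity)
          _ = 2 ^ n * x ^ (n + 2 - p) / (Nat.factorial (n + 2 - p) : ℝ) := by ring
      have h2n : (2:ℝ) ^ n * x ^ (n + 2 - p) / (Nat.factorial (n + 2 - p) : ℝ) +
          2 ^ n * x ^ (n + 2 - p) / (Nat.factorial (n + 2 - p) : ℝ) =
          2 ^ (n+1) * x ^ (n + 1 + 1 - p) / (Nat.factorial (n + 1 + 1 - p) : ℝ) := by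
        have : n + 1 + 1 - p = n + 2 - p := by omega
        rw [this]; ring
      by_cases hk : k = 1
      · simp only [hk, if_true]
        refine le_trans ((hIb p).trans hkey) ?_
        rw [← h2n]
        have : (0:ℝ) ≤ 2 ^ n * x ^ (n + 2 - p) / (Nat.factorial (n + 2 - p) : ℝ) := by positivity
        linarith
      · simp only [hk, if_false]
        have hA : (1 - x) * R n (p-1) (k-1) x ≤
            2 ^ n * x ^ (n + 2 - p) / (Nat.factorial (n + 2 - p) : ℝ) := by
          have hr := ih (p-1) (k-1) x hx0 hx1
          have he : n + 1 - (p - 1) = n + 2 - p := by omega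
          rw [he] at hr
          have hRn := R_nonneg n (p-1) (k-1) x hx0 hx1
          nlinarith
        have hB := (hIb (k-1)).trans hkey
        rw [← h2n]
        linarith

lemma R_le_bnd (n p k : ℕ) {x : ℝ} (hx0 : 0 ≤ x) (hx1 : x ≤ 1) :
    R n p k x ≤ 2 ^ n / (Nat.factorial (n + 1 - p) : ℝ) := by
  refine (R_le n p k x hx0 hx1).trans ?_
  have : x ^ (n + 1 - p) ≤ 1 := pow_le_one₀ hx0 hx1
  have hf : (0:ℝ) < Nat.factorial (n + 1 - p) := by exact_mod_cast Nat.factorial_pos _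
  calc 2 ^ n * x ^ (n + 1 - p) / (Nat.factorial (n + 1 - p) : ℝ)
      ≤ 2 ^ n * 1 / (Nat.factorial (n + 1 - p) : ℝ) := by gcongr
    _ = 2 ^ n / (Nat.factorial (n + 1 - p) : ℝ) := by ring

lemma summable_bnd (p : ℕ) :
    Summable (fun n => (2:ℝ) ^ n / (Nat.factorial (n + 1 - p) : ℝ)) := by
  rw [← summable_nat_add_iff p]
  have h : ∀ n : ℕ, (2:ℝ) ^ (n + p) / (Nat.factorial (n + p + 1 - p) : ℝ) ≤
      2 ^ p * (2 ^ n / (Nat.factorial n : ℝ)) := by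
    intro n
    have he : n + p + 1 - p = n + 1 := by omega
    rw [he]
    have h1 : (Nat.factorial n : ℝ) ≤ (Nat.factorial (n+1) : ℝ) := by
      exact_mod_cast Nat.factorial_le (Nat.le_succ n)
    have hn : (0:ℝ) < Nat.factorial n := by exact_mod_cast Nat.factorial_pos n
    have hn1 : (0:ℝ) < Nat.factorial (n+1) := by exact_mod_cast Nat.factorial_pos (n+1)
    rw [pow_add]
    rw [div_le_iff₀ hn1]
    calc (2:ℝ) ^ n * 2 ^ p = (2 ^ p * (2 ^ n / (Nat.factorial n : ℝ))) * Nat.factorial n := by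
          field_simp
      _ ≤ (2 ^ p * (2 ^ n / (Nat.factorial n : ℝ))) * Nat.factorial (n+1) := by
          apply mul_le_mul_of_nonneg_left h1 (by positivity)
  apply Summable.of_nonneg_of_le (fun n => by positivity) h
  exact ((Real.summable_pow_div_factorial 2).mul_left _)

lemma summable_R (p k : ℕ) {x : ℝ} (hx0 : 0 ≤ x) (hx1 : x ≤ 1) :
    Summable (fun n => R n p k x) :=
  Summable.of_nonneg_of_le (fun n => R_nonneg n p k x hx0 hx1)
    (fun n => R_le_bnd n p k hx0 hx1) (summable_bnd p)
lemma P_nonneg (p k : ℕ) {x : ℝ} (hx0 : 0 ≤ x) (hx1 : x ≤ 1) : 0 ≤ P p k x :=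
  tsum_nonneg (fun n => R_nonneg n p k x hx0 hx1)

lemma P_contOn (p k : ℕ) : ContinuousOn (P p k) (Set.Icc 0 1) := by
  apply continuousOn_tsum (fun n => (R_cont n p k).continuousOn) (summable_bnd p)
  intro n x hx
  rw [Real.norm_eq_abs, abs_of_nonneg (R_nonneg n p k x hx.1 hx.2)]
  exact R_le_bnd n p k hx.1 hx.2

lemma uIcc_sub {a b : ℝ} (ha : a ∈ Set.Icc (0:ℝ) 1) (hb : b ∈ Set.Icc (0:ℝ) 1) :
    Set.uIcc a b ⊆ Set.Icc (0:ℝ) 1 := by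
  rw [← Set.uIcc_of_le (zero_le_one (α := ℝ))]
  rw [Set.uIcc_subset_uIcc_iff_mem, Set.uIcc_of_le (zero_le_one (α := ℝ))]
  exact ⟨ha, hb⟩

lemma P_intble (p k : ℕ) {a b : ℝ} (ha : a ∈ Set.Icc (0:ℝ) 1) (hb : b ∈ Set.Icc (0:ℝ) 1) :
    IntervalIntegrable (P p k) volume a b :=
  ((P_contOn p k).mono (uIcc_sub ha hb)).intervalIntegrable

-- key interchange lemma
lemma integral_tsum_swap {f : ℕ → ℝ → ℝ} {u : ℕ → ℝ} (hc : ∀ n, Continuous (f n))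
    (hu : Summable u) (hb : ∀ n v, v ∈ Set.Icc (0:ℝ) 1 → |f n v| ≤ u n)
    {t : ℝ} (ht0 : 0 ≤ t) (ht1 : t ≤ 1) :
    ∫ v in (0:ℝ)..t, (∑' n, f n v) = ∑' n, ∫ v in (0:ℝ)..t, f n v := by
  have hu0 : ∀ n, 0 ≤ u n := fun n =>
    le_trans (abs_nonneg _) (hb n 0 ⟨le_refl 0, zero_le_one⟩)
  have hmeas : ∀ n, AEStronglyMeasurable (f n) (volume.restrict (Set.Ioc (0:ℝ) t)) :=
    fun n => (hc n).aestronglyMeasurable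
  have hfin : (∑' n, ∫⁻ a, ‖f n a‖₊ ∂(volume.restrict (Set.Ioc (0:ℝ) t))) ≠ ⊤ := by
    have key : ∀ n, (∫⁻ a, ‖f n a‖₊ ∂(volume.restrict (Set.Ioc (0:ℝ) t)))
        ≤ ENNReal.ofReal (u n) := by
      intro n
      have h1 : (∫⁻ a, ‖f n a‖₊ ∂(volume.restrict (Set.Ioc (0:ℝ) t)))
          ≤ ∫⁻ _, ENNReal.ofReal (u n) ∂(volume.restrict (Set.Ioc (0:ℝ) t)) := by
        apply lintegral_mono_ae
        filter_upwards [ae_restrict_mem measurableSet_Ioc] with a ha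
        rw [← enorm_eq_nnnorm, Real.enorm_eq_ofReal_abs]
        exact ENNReal.ofReal_le_ofReal (hb n a ⟨le_of_lt ha.1, le_trans ha.2 ht1⟩)
      have h2 : (∫⁻ _, ENNReal.ofReal (u n) ∂(volume.restrict (Set.Ioc (0:ℝ) t)))
          = ENNReal.ofReal (u n) * ENNReal.ofReal (t - 0) := by
        rw [MeasureTheory.lintegral_const, Measure.restrict_apply_univ, Real.volume_Ioc]
      refine h1.trans (h2.le.trans ?_)
      calc ENNReal.ofReal (u n) * ENNReal.ofReal (t - 0)
          ≤ ENNReal.ofReal (u n) * 1 := by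
            apply mul_le_mul_right
            rw [← ENNReal.ofReal_one]
            exact ENNReal.ofReal_le_ofReal (by linarith)
        _ = ENNReal.ofReal (u n) := mul_one _
    refine ne_top_of_le_ne_top ?_ (ENNReal.tsum_le_tsum key)
    rw [← ENNReal.ofReal_tsum_of_nonneg hu0 hu]
    exact ENNReal.ofReal_ne_top
  rw [intervalIntegral.integral_of_le ht0, MeasureTheory.integral_tsum hmeas hfin]
  exact tsum_congr fun n => (intervalIntegral.integral_of_le ht0).symm

-- Fubini-type identity for primitives of continuous functions
lemma primitive_swap (f : ℝ → ℝ) (hf : Continuous f) (t : ℝ) :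
    ∫ s in (0:ℝ)..t, (∫ u in (0:ℝ)..s, f u) = ∫ s in (0:ℝ)..t, (t - s) * f s := by
  have hA : Continuous (fun s => ∫ u in (0:ℝ)..s, f u) :=
    intervalIntegral.continuous_primitive (fun a b => hf.intervalIntegrable a b) 0
  have hg : Continuous (fun u : ℝ => u * f u) := continuous_id.mul hf
  have hB : Continuous (fun s => ∫ u in (0:ℝ)..s, u * f u) :=
    intervalIntegral.continuous_primitive (fun a b => hg.intervalIntegrable a b) 0
  have hder : ∀ s ∈ Set.uIcc (0:ℝ) t,
      HasDerivAt (fun y => y * (∫ u in (0:ℝ)..y, f u) - ∫ u in (0:ℝ)..y, u * f u)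
        (∫ u in (0:ℝ)..s, f u) s := by
    intro s _
    have h1 : HasDerivAt (fun y => ∫ u in (0:ℝ)..y, f u) (f s) s :=
      intervalIntegral.integral_hasDerivAt_right (hf.intervalIntegrable _ _)
        (hf.stronglyMeasurableAtFilter _ _) hf.continuousAt
    have h2 : HasDerivAt (fun y => ∫ u in (0:ℝ)..y, u * f u) (s * f s) s :=
      intervalIntegral.integral_hasDerivAt_right (hg.intervalIntegrable _ _)
        (hg.stronglyMeasurableAtFilter _ _) hg.continuousAt
    have h3 : HasDerivAt (fun y : ℝ => y * (∫ u in (0:ℝ)..y, f u))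
        (1 * (∫ u in (0:ℝ)..s, f u) + s * f s) s := (hasDerivAt_id s).mul h1
    have h4 := h3.sub h2
    simpa [Pi.sub_def] using h4
  have hFTC := intervalIntegral.integral_eq_sub_of_hasDerivAt hder
    (hA.intervalIntegrable 0 t)
  rw [hFTC]
  have hsplit : ∫ s in (0:ℝ)..t, (t - s) * f s
      = (∫ s in (0:ℝ)..t, t * f s) - ∫ s in (0:ℝ)..t, s * f s := by
    rw [← intervalIntegral.integral_sub (f := fun s => t * f s) ((continuous_const.mul hf).intervalIntegrable _ _)
      (hg.intervalIntegrable _ _)]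
    congr 1; ext s; ring
  rw [hsplit, intervalIntegral.integral_const_mul]
  simp
lemma R_abs_le_bnd (n p k : ℕ) {x : ℝ} (hx : x ∈ Set.Icc (0:ℝ) 1) :
    |R n p k x| ≤ 2 ^ n / (Nat.factorial (n + 1 - p) : ℝ) := by
  rw [abs_of_nonneg (R_nonneg n p k x hx.1 hx.2)]
  exact R_le_bnd n p k hx.1 hx.2

lemma wR_abs_le_bnd {w : ℝ → ℝ} (hwb : ∀ v ∈ Set.Icc (0:ℝ) 1, |w v| ≤ 1)
    (n p k : ℕ) {x : ℝ} (hx : x ∈ Set.Icc (0:ℝ) 1) :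
    |w x * R n p k x| ≤ 2 ^ n / (Nat.factorial (n + 1 - p) : ℝ) := by
  rw [abs_mul]
  calc |w x| * |R n p k x| ≤ 1 * (2 ^ n / (Nat.factorial (n + 1 - p) : ℝ)) :=
        mul_le_mul (hwb x hx) (R_abs_le_bnd n p k hx) (abs_nonneg _) zero_le_one
    _ = _ := one_mul _

/-- weighted interchange for `P`. -/
lemma P_wswap (p k : ℕ) {w : ℝ → ℝ} (hw : Continuous w)
    (hwb : ∀ v ∈ Set.Icc (0:ℝ) 1, |w v| ≤ 1) {x : ℝ} (hx : x ∈ Set.Icc (0:ℝ) 1) :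
    ∫ v in (0:ℝ)..x, w v * P p k v = ∑' n, ∫ v in (0:ℝ)..x, w v * R n p k v := by
  have h : ∫ v in (0:ℝ)..x, (∑' n, w v * R n p k v) = ∑' n, ∫ v in (0:ℝ)..x, w v * R n p k v :=
    integral_tsum_swap (fun n => hw.mul (R_cont n p k)) (summable_bnd p)
      (fun n v hv => wR_abs_le_bnd hwb n p k hv) hx.1 hx.2
  rw [← h]
  apply intervalIntegral.integral_congr
  intro v hv
  have hv' : v ∈ Set.Icc (0:ℝ) 1 := by
    rw [Set.uIcc_of_le hx.1] at hv
    exact ⟨hv.1, le_trans hv.2 hx.2⟩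
  exact tsum_mul_left.symm

lemma one_wb : ∀ v ∈ Set.Icc (0:ℝ) 1, |(1:ℝ)| ≤ 1 := fun _ _ => by norm_num

lemma P_swap (p k : ℕ) {x : ℝ} (hx : x ∈ Set.Icc (0:ℝ) 1) :
    ∫ v in (0:ℝ)..x, P p k v = ∑' n, ∫ v in (0:ℝ)..x, R n p k v := by
  have h := P_wswap p k (w := fun _ => (1:ℝ)) continuous_const one_wb hx
  simpa using h

lemma summable_intR (p k : ℕ) {x : ℝ} (hx : x ∈ Set.Icc (0:ℝ) 1) :
    Summable (fun n => ∫ v in (0:ℝ)..x, R n p k v) := by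
  refine Summable.of_nonneg_of_le ?_ ?_ (summable_bnd p)
  · intro n
    exact intervalIntegral.integral_nonneg hx.1
      (fun u hu => R_nonneg n p k u hu.1 (le_trans hu.2 hx.2))
  · intro n
    have h := intervalIntegral.norm_integral_le_of_norm_le_const
      (C := 2 ^ n / (Nat.factorial (n + 1 - p) : ℝ)) (f := R n p k) (a := 0) (b := x) ?_
    · rw [Real.norm_eq_abs] at h
      have hx' : |x - 0| ≤ 1 := by rw [sub_zero, abs_of_nonneg hx.1]; exact hx.2
      have hb0 : (0:ℝ) ≤ 2 ^ n / (Nat.factorial (n + 1 - p) : ℝ) := by positivity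
      calc (∫ v in (0:ℝ)..x, R n p k v) ≤ |∫ v in (0:ℝ)..x, R n p k v| := le_abs_self _
        _ ≤ 2 ^ n / (Nat.factorial (n + 1 - p) : ℝ) * |x - 0| := h
        _ ≤ 2 ^ n / (Nat.factorial (n + 1 - p) : ℝ) * 1 :=
            mul_le_mul_of_nonneg_left hx' hb0
        _ = _ := mul_one _
    · intro v hv
      have hv' : v ∈ Set.Icc (0:ℝ) 1 := by
        rw [Set.uIoc_of_le hx.1] at hv
        exact ⟨le_of_lt hv.1, le_trans hv.2 hx.2⟩
      rw [Real.norm_eq_abs]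
      exact R_abs_le_bnd n p k hv'

/-- functional equation, first player -/
lemma P_fe1 (p : ℕ) (hp : 2 ≤ p) {x : ℝ} (hx : x ∈ Set.Icc (0:ℝ) 1) :
    P p 1 x = ∫ v in (0:ℝ)..x, P p p v := by
  have hsum := summable_R p 1 hx.1 hx.2
  rw [P, Summable.tsum_eq_zero_add hsum]
  have h0 : R 0 p 1 x = 0 := by
    rw [R_zero]
    have : p ≠ 1 := by omega
    simp [this]
  have hn : ∀ n, R (n+1) p 1 x = ∫ v in (0:ℝ)..x, R n p p v := by
    intro n
    rw [R_succ]
    have : ¬ p ≤ 1 := by omega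
    simp [this]
  simp_rw [h0, hn, zero_add]
  rw [P_swap p p hx]

/-- functional equation, later players -/
lemma P_fek (p k : ℕ) (hp : 2 ≤ p) (hk : 2 ≤ k) {x : ℝ} (hx : x ∈ Set.Icc (0:ℝ) 1) :
    P p k x = (1 - x) * P (p-1) (k-1) x + ∫ v in (0:ℝ)..x, P p (k-1) v := by
  have hsum := summable_R p k hx.1 hx.2
  rw [P, Summable.tsum_eq_zero_add hsum]
  have h0 : R 0 p k x = 0 := by
    rw [R_zero]
    have : ¬(p = 1 ∧ k = 1) := by omega
    simp [this]
  have hn : ∀ n, R (n+1) p k x =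
      (1 - x) * R n (p-1) (k-1) x + ∫ v in (0:ℝ)..x, R n p (k-1) v := by
    intro n
    rw [R_succ]
    have h1 : ¬ p ≤ 1 := by omega
    have h2 : k ≠ 1 := by omega
    simp [h1, h2]
  simp_rw [h0, hn, zero_add]
  rw [Summable.tsum_add (((summable_R (p-1) (k-1) hx.1 hx.2).mul_left _)) (summable_intR p (k-1) hx),
    tsum_mul_left, ← P_swap p (k-1) hx]
  rfl
-- abs bound for weighted primitives of R
lemma intwR_abs_le {w : ℝ → ℝ} (hwb : ∀ v ∈ Set.Icc (0:ℝ) 1, |w v| ≤ 1)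
    (n p k : ℕ) {s : ℝ} (hs : s ∈ Set.Icc (0:ℝ) 1) :
    |∫ u in (0:ℝ)..s, w u * R n p k u| ≤ 2 ^ n / (Nat.factorial (n + 1 - p) : ℝ) := by
  have h := intervalIntegral.norm_integral_le_of_norm_le_const
    (C := 2 ^ n / (Nat.factorial (n + 1 - p) : ℝ)) (f := fun u => w u * R n p k u)
    (a := 0) (b := s) ?_
  · rw [Real.norm_eq_abs] at h
    have hs' : |s - 0| ≤ 1 := by rw [sub_zero, abs_of_nonneg hs.1]; exact hs.2
    have hb0 : (0:ℝ) ≤ 2 ^ n / (Nat.factorial (n + 1 - p) : ℝ) := by positivity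
    calc |∫ u in (0:ℝ)..s, w u * R n p k u|
        ≤ 2 ^ n / (Nat.factorial (n + 1 - p) : ℝ) * |s - 0| := h
      _ ≤ 2 ^ n / (Nat.factorial (n + 1 - p) : ℝ) * 1 := mul_le_mul_of_nonneg_left hs' hb0
      _ = _ := mul_one _
  · intro v hv
    have hv' : v ∈ Set.Icc (0:ℝ) 1 := by
      rw [Set.uIoc_of_le hs.1] at hv
      exact ⟨le_of_lt hv.1, le_trans hv.2 hs.2⟩
    rw [Real.norm_eq_abs]
    exact wR_abs_le_bnd hwb n p k hv'

/-- Fubini-type identity for weighted primitives of `P`. -/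
lemma FP_P (p k : ℕ) {w : ℝ → ℝ} (hw : Continuous w)
    (hwb : ∀ v ∈ Set.Icc (0:ℝ) 1, |w v| ≤ 1) {t : ℝ} (ht : t ∈ Set.Icc (0:ℝ) 1) :
    ∫ s in (0:ℝ)..t, (∫ u in (0:ℝ)..s, w u * P p k u)
      = ∫ s in (0:ℝ)..t, (t - s) * (w s * P p k s) := by
  have hIcc : ∀ {s : ℝ}, s ∈ Set.uIcc (0:ℝ) t → s ∈ Set.Icc (0:ℝ) 1 := by
    intro s hs
    rw [Set.uIcc_of_le ht.1] at hs
    exact ⟨hs.1, le_trans hs.2 ht.2⟩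
  have step1 : ∫ s in (0:ℝ)..t, (∫ u in (0:ℝ)..s, w u * P p k u)
      = ∫ s in (0:ℝ)..t, (∑' n, ∫ u in (0:ℝ)..s, w u * R n p k u) :=
    intervalIntegral.integral_congr (fun s hs => P_wswap p k hw hwb (hIcc hs))
  have step2 : ∫ s in (0:ℝ)..t, (∑' n, ∫ u in (0:ℝ)..s, w u * R n p k u)
      = ∑' n, ∫ s in (0:ℝ)..t, (∫ u in (0:ℝ)..s, w u * R n p k u) :=
    integral_tsum_swap
      (fun n => intervalIntegral.continuous_primitive
        (fun a b => ((hw.mul (R_cont n p k))).intervalIntegrable a b) 0)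
      (summable_bnd p) (fun n s hs => intwR_abs_le hwb n p k hs) ht.1 ht.2
  have step3 : ∀ n, ∫ s in (0:ℝ)..t, (∫ u in (0:ℝ)..s, w u * R n p k u)
      = ∫ s in (0:ℝ)..t, (t - s) * (w s * R n p k s) :=
    fun n => primitive_swap _ (hw.mul (R_cont n p k)) t
  have habs : ∀ n (s : ℝ), s ∈ Set.Icc (0:ℝ) 1 →
      |(t - s) * (w s * R n p k s)| ≤ 2 ^ n / (Nat.factorial (n + 1 - p) : ℝ) := by
    intro n s hs
    rw [abs_mul]
    have h1 : |t - s| ≤ 1 := by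
      rw [abs_le]
      constructor <;> [linarith [ht.1, hs.2]; linarith [ht.2, hs.1]]
    calc |t - s| * |w s * R n p k s|
        ≤ 1 * (2 ^ n / (Nat.factorial (n + 1 - p) : ℝ)) :=
          mul_le_mul h1 (wR_abs_le_bnd hwb n p k hs) (abs_nonneg _) zero_le_one
      _ = _ := one_mul _
  have step4 : ∑' n, ∫ s in (0:ℝ)..t, (t - s) * (w s * R n p k s)
      = ∫ s in (0:ℝ)..t, (t - s) * (w s * P p k s) := by
    rw [show (fun s => (t - s) * (w s * P p k s))
        = fun s => ∑' n, (t - s) * (w s * R n p k s) from ?_]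
    · exact (integral_tsum_swap
        (fun n => (continuous_const.sub continuous_id).mul (hw.mul (R_cont n p k)))
        (summable_bnd p) habs ht.1 ht.2).symm
    · funext s
      rw [tsum_mul_left, tsum_mul_left]
      rfl
  rw [step1, step2]
  rw [tsum_congr step3, step4]

lemma FP_P1 (p k : ℕ) {t : ℝ} (ht : t ∈ Set.Icc (0:ℝ) 1) :
    ∫ s in (0:ℝ)..t, (∫ u in (0:ℝ)..s, P p k u)
      = ∫ s in (0:ℝ)..t, (t - s) * P p k s := by
  have h := FP_P p k (w := fun _ => (1:ℝ)) continuous_const (fun _ _ => by norm_num) ht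
  simpa using h

lemma FP_P1m (p k : ℕ) {t : ℝ} (ht : t ∈ Set.Icc (0:ℝ) 1) :
    ∫ s in (0:ℝ)..t, (∫ u in (0:ℝ)..s, (1 - u) * P p k u)
      = ∫ s in (0:ℝ)..t, (t - s) * ((1 - s) * P p k s) := by
  refine FP_P p k (by continuity : Continuous fun v : ℝ => 1 - v) ?_ ht
  intro v hv
  rw [abs_le]
  exact ⟨by linarith [hv.2], by linarith [hv.1]⟩

-- positivity
lemma R_pos_qq : ∀ q, 1 ≤ q → ∀ x : ℝ, 0 < x → x < 1 → 0 < R (q-1) q q x := by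
  intro q
  induction q with
  | zero => omega
  | succ q ih =>
    intro _ x hx0 hx1
    by_cases h : q = 0
    · subst h; rw [R_zero]; norm_num
    · have hq1 : 1 ≤ q := Nat.one_le_iff_ne_zero.mpr h
      have e0 : q + 1 - 1 = (q - 1) + 1 := by omega
      rw [e0, R_succ]
      have hp : ¬ (q + 1 ≤ 1) := by omega
      have hk : q + 1 ≠ 1 := by omega
      simp only [hp, if_false, hk, if_false]
      have e1 : q + 1 - 1 = q := by omega
      rw [e1]
      have hA : 0 < (1 - x) * R (q-1) q q x :=
        mul_pos (by linarith) (ih hq1 x hx0 hx1)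
      have hB : 0 ≤ ∫ v in (0:ℝ)..x, R (q-1) (q+1) q v :=
        intervalIntegral.integral_nonneg (le_of_lt hx0)
          (fun u hu => R_nonneg _ _ _ u hu.1 (le_trans hu.2 (le_of_lt hx1)))
      linarith

lemma P_pos_qq (q : ℕ) (hq : 1 ≤ q) {x : ℝ} (hx0 : 0 < x) (hx1 : x < 1) : 0 < P q q x := by
  have h1 := R_pos_qq q hq x hx0 hx1
  have h2 : R (q-1) q q x ≤ P q q x :=
    Summable.le_tsum (summable_R q q (le_of_lt hx0) (le_of_lt hx1)) (q-1)
      (fun j _ => R_nonneg j q q x (le_of_lt hx0) (le_of_lt hx1))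
  linarith

lemma P1_mono (p : ℕ) (hp : 2 ≤ p) {s t : ℝ} (hs : 0 ≤ s) (hst : s ≤ t) (ht : t ≤ 1) :
    P p 1 s ≤ P p 1 t := by
  have hsI : s ∈ Set.Icc (0:ℝ) 1 := ⟨hs, le_trans hst ht⟩
  have htI : t ∈ Set.Icc (0:ℝ) 1 := ⟨le_trans hs hst, ht⟩
  rw [P_fe1 p hp hsI, P_fe1 p hp htI]
  have hadd := intervalIntegral.integral_add_adjacent_intervals
    (P_intble p p (Set.left_mem_Icc.mpr zero_le_one) hsI) (P_intble p p hsI htI)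
  have hpos : 0 ≤ ∫ v in s..t, P p p v :=
    intervalIntegral.integral_nonneg hst
      (fun u hu => P_nonneg p p (le_trans hs hu.1) (le_trans hu.2 ht))
  linarith

lemma P1_lt (q : ℕ) (hq : 2 ≤ q) {t : ℝ} (ht0 : 0 ≤ t) (ht1 : t < 1) :
    P q 1 t < P q 1 1 := by
  have htI : t ∈ Set.Icc (0:ℝ) 1 := ⟨ht0, le_of_lt ht1⟩
  have h1I : (1:ℝ) ∈ Set.Icc (0:ℝ) 1 := Set.right_mem_Icc.mpr zero_le_one
  rw [P_fe1 q hq htI, P_fe1 q hq h1I]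
  have hadd := intervalIntegral.integral_add_adjacent_intervals
    (P_intble q q (Set.left_mem_Icc.mpr zero_le_one) htI) (P_intble q q htI h1I)
  have hpos : 0 < ∫ v in t..1, P q q v := by
    apply intervalIntegral_pos_of_pos_on (P_intble q q htI h1I) _ ht1
    intro x hx
    exact P_pos_qq q (by omega) (lt_of_le_of_lt ht0 hx.1) hx.2
  linarith

lemma Hc (q : ℕ) (hq : 2 ≤ q) : (∫ x in (0:ℝ)..1, P q 1 x) < P q 1 1 := by
  have h1I : (1:ℝ) ∈ Set.Icc (0:ℝ) 1 := Set.right_mem_Icc.mpr zero_le_one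
  have h0I : (0:ℝ) ∈ Set.Icc (0:ℝ) 1 := Set.left_mem_Icc.mpr zero_le_one
  have h : 0 < ∫ x in (0:ℝ)..1, (P q 1 1 - P q 1 x) := by
    apply intervalIntegral_pos_of_pos_on
      (intervalIntegrable_const.sub (P_intble q 1 h0I h1I)) _ zero_lt_one
    intro x hx
    have := P1_lt q hq (le_of_lt hx.1) hx.2
    linarith
  rw [intervalIntegral.integral_sub intervalIntegrable_const (P_intble q 1 h0I h1I)] at h
  simp only [intervalIntegral.integral_const, smul_eq_mul, sub_zero, one_mul] at h
  linarith

lemma P1_primitive_le (p : ℕ) (hp : 2 ≤ p) {x : ℝ} (hx : x ∈ Set.Icc (0:ℝ) 1) :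
    (∫ v in (0:ℝ)..x, P p 1 v) ≤ P p 1 x := by
  have h0I : (0:ℝ) ∈ Set.Icc (0:ℝ) 1 := Set.left_mem_Icc.mpr zero_le_one
  have h1 : (∫ v in (0:ℝ)..x, P p 1 v) ≤ ∫ _ in (0:ℝ)..x, P p 1 x := by
    apply intervalIntegral.integral_mono_on hx.1 (P_intble p 1 h0I hx)
      intervalIntegrable_const
    intro v hv
    exact P1_mono p hp hv.1 hv.2 hx.2
  have h2 : (∫ _ in (0:ℝ)..x, P p 1 x) = x * P p 1 x := by
    simp [intervalIntegral.integral_const]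
  have h3 : x * P p 1 x ≤ 1 * P p 1 x :=
    mul_le_mul_of_nonneg_right hx.2 (P_nonneg p 1 hx.1 hx.2)
  rw [h2] at h1
  linarith
-- helpers for the main induction
lemma h0I : (0:ℝ) ∈ Set.Icc (0:ℝ) 1 := Set.left_mem_Icc.mpr zero_le_one
lemma h1I : (1:ℝ) ∈ Set.Icc (0:ℝ) 1 := Set.right_mem_Icc.mpr zero_le_one

lemma mem_of_uIcc {x t : ℝ} (ht : t ∈ Set.Icc (0:ℝ) 1) (hx : x ∈ Set.uIcc (0:ℝ) t) :
    x ∈ Set.Icc (0:ℝ) 1 := by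
  rw [Set.uIcc_of_le ht.1] at hx
  exact ⟨hx.1, le_trans hx.2 ht.2⟩

lemma mem_of_Icc0 {x t : ℝ} (ht : t ∈ Set.Icc (0:ℝ) 1) (hx : x ∈ Set.Icc (0:ℝ) t) :
    x ∈ Set.Icc (0:ℝ) 1 := ⟨hx.1, le_trans hx.2 ht.2⟩

lemma intble_mulP {w : ℝ → ℝ} (hw : Continuous w) (p k : ℕ) {a b : ℝ}
    (ha : a ∈ Set.Icc (0:ℝ) 1) (hb : b ∈ Set.Icc (0:ℝ) 1) :
    IntervalIntegrable (fun s => w s * P p k s) volume a b :=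
  ((hw.continuousOn.mul (P_contOn p k)).mono (uIcc_sub ha hb)).intervalIntegrable

lemma intble_prim (p k : ℕ) {a b : ℝ} (ha : a ∈ Set.Icc (0:ℝ) 1) (hb : b ∈ Set.Icc (0:ℝ) 1) :
    IntervalIntegrable (fun s => ∫ v in (0:ℝ)..s, P p k v) volume a b := by
  have hc : ContinuousOn (fun s => ∫ v in (0:ℝ)..s, P p k v) (Set.uIcc (0:ℝ) 1) :=
    intervalIntegral.continuousOn_primitive_interval'
      (P_intble p k h0I h1I) Set.left_mem_uIcc
  have : Set.uIcc (0:ℝ) 1 = Set.Icc (0:ℝ) 1 := Set.uIcc_of_le zero_le_one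
  rw [this] at hc
  exact (hc.mono (uIcc_sub ha hb)).intervalIntegrable

/-- step inequality ♥': one extra waiting position costs at most the `(p-1)`-game value. -/
lemma hv_lemma (q : ℕ) (hq : 2 ≤ q)
    (Aq : ∀ j, 1 ≤ j → j + 2 ≤ q → ∀ x ∈ Set.Icc (0:ℝ) 1, P q (j+1) x ≤ P q j x) :
    ∀ j, 2 ≤ j → j ≤ q → ∀ x ∈ Set.Icc (0:ℝ) 1,
      P (q+1) j x ≤ P (q+1) (j-1) x + P q (j-1) x := by
  intro j hj
  induction j, hj using Nat.le_induction with
  | base =>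
    intro _ x hx
    have hfe := P_fek (q+1) 2 (by omega) (by omega) hx
    simp only [Nat.add_sub_cancel] at hfe
    have hd0 := P1_primitive_le (q+1) (by omega) hx
    have hP1 := P_nonneg q 1 hx.1 hx.2
    have hxx : (1 - x) * P q 1 x ≤ P q 1 x := by nlinarith [hx.1, hx.2]
    simp only [show (2:ℕ) - 1 = 1 from rfl] at *
    linarith [hfe.le, hfe.ge]
  | succ j hj2 ih =>
    intro hj1 x hx
    have hjq : j ≤ q := by omega
    have ej : j - 1 + 1 = j := by omega
    -- expansions
    have hfe1 := P_fek (q+1) (j+1) (by omega) (by omega) hx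
    simp only [Nat.add_sub_cancel] at hfe1
    have hfe2 := P_fek (q+1) j (by omega) (by omega) hx
    simp only [Nat.add_sub_cancel] at hfe2
    have hfe3 := P_fek q j hq (by omega) hx
    -- (1-x) * (P q j x - P q (j-1) x) ≤ 0
    have hAq : P q j x ≤ P q (j-1) x := by
      have := Aq (j-1) (by omega) (by omega) x hx
      rw [ej] at this
      exact this
    -- ∫ P (q+1) j ≤ ∫ P (q+1) (j-1) + ∫ P q (j-1)
    have hIH : (∫ v in (0:ℝ)..x, P (q+1) j v)
        ≤ (∫ v in (0:ℝ)..x, P (q+1) (j-1) v) + ∫ v in (0:ℝ)..x, P q (j-1) v := by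
      have hmono : (∫ v in (0:ℝ)..x, P (q+1) j v)
          ≤ ∫ v in (0:ℝ)..x, (P (q+1) (j-1) v + P q (j-1) v) := by
        apply intervalIntegral.integral_mono_on hx.1 (P_intble (q+1) j h0I hx)
          ((P_intble (q+1) (j-1) h0I hx).add (P_intble q (j-1) h0I hx))
        intro v hv
        exact ih hjq v (mem_of_Icc0 hx hv)
      rwa [intervalIntegral.integral_add (P_intble (q+1) (j-1) h0I hx)
        (P_intble q (j-1) h0I hx)] at hmono
    -- ∫ P q (j-1) ≤ P q j x
    have htail : (∫ v in (0:ℝ)..x, P q (j-1) v) ≤ P q j x := by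
      have h1 : 0 ≤ (1 - x) * P (q-1) (j-1) x :=
        mul_nonneg (by linarith [hx.2]) (P_nonneg (q-1) (j-1) hx.1 hx.2)
      linarith [hfe3]
    have h1x : 0 ≤ 1 - x := by linarith [hx.2]
    have hmul : (1 - x) * P q j x ≤ (1 - x) * P q (j-1) x :=
      mul_le_mul_of_nonneg_left hAq h1x
    calc P (q+1) (j+1) x = (1 - x) * P q j x + ∫ v in (0:ℝ)..x, P (q+1) j v := hfe1
      _ ≤ (1 - x) * P q (j-1) x + ((∫ v in (0:ℝ)..x, P (q+1) (j-1) v)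
            + ∫ v in (0:ℝ)..x, P q (j-1) v) := by linarith
      _ ≤ (1 - x) * P q (j-1) x + ((∫ v in (0:ℝ)..x, P (q+1) (j-1) v) + P q j x) := by
            linarith
      _ = P (q+1) j x + P q j x := by rw [hfe2]; ring

/-- ♠ : the primitive gap between last and second-to-last is at most `∫ (1-s) P q q`. -/
lemma hsp_lemma (q : ℕ) (hq : 2 ≤ q)
    (Aq : ∀ j, 1 ≤ j → j + 2 ≤ q → ∀ x ∈ Set.Icc (0:ℝ) 1, P q (j+1) x ≤ P q j x)
    {t : ℝ} (ht : t ∈ Set.Icc (0:ℝ) 1) :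
    (∫ s in (0:ℝ)..t, P (q+1) (q+1) s)
      ≤ (∫ s in (0:ℝ)..t, P (q+1) q s) + ∫ s in (0:ℝ)..t, (1 - s) * P q q s := by
  have hvq := hv_lemma q hq Aq
  have hw : Continuous fun s : ℝ => 1 - s := continuous_const.sub continuous_id
  have hi1 : IntervalIntegrable (fun s => (1 - s) * P q q s) volume 0 t :=
    intble_mulP hw q q h0I ht
  have hi2 : IntervalIntegrable (fun s => (1 - s) * P q (q-1) s) volume 0 t :=
    intble_mulP hw q (q-1) h0I ht
  have hi3 := intble_prim q (q-1) h0I ht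
  -- pointwise bound (†) on [0,t]
  have hpt : ∀ s ∈ Set.Icc (0:ℝ) t,
      P (q+1) (q+1) s ≤ P (q+1) q s + ((1 - s) * P q q s - (1 - s) * P q (q-1) s
        + ∫ u in (0:ℝ)..s, P q (q-1) u) := by
    intro s hs
    have hsI : s ∈ Set.Icc (0:ℝ) 1 := mem_of_Icc0 ht hs
    have hfeQ := P_fek (q+1) (q+1) (by omega) (by omega) hsI
    simp only [Nat.add_sub_cancel] at hfeQ
    have hfeq := P_fek (q+1) q (by omega) (by omega) hsI
    simp only [Nat.add_sub_cancel] at hfeq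
    have hint : (∫ u in (0:ℝ)..s, P (q+1) q u)
        ≤ (∫ u in (0:ℝ)..s, P (q+1) (q-1) u) + ∫ u in (0:ℝ)..s, P q (q-1) u := by
      have hmono : (∫ u in (0:ℝ)..s, P (q+1) q u)
          ≤ ∫ u in (0:ℝ)..s, (P (q+1) (q-1) u + P q (q-1) u) := by
        apply intervalIntegral.integral_mono_on hsI.1 (P_intble (q+1) q h0I hsI)
          ((P_intble (q+1) (q-1) h0I hsI).add (P_intble q (q-1) h0I hsI))
        intro v hv
        exact hvq q (by omega) le_rfl v (mem_of_Icc0 hsI hv)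
      rwa [intervalIntegral.integral_add (P_intble (q+1) (q-1) h0I hsI)
        (P_intble q (q-1) h0I hsI)] at hmono
    linarith [hfeQ.le, hfeq.ge]
  -- integrate over [0,t]
  have hI1 : (∫ s in (0:ℝ)..t, P (q+1) (q+1) s)
      ≤ ∫ s in (0:ℝ)..t, (P (q+1) q s + ((1 - s) * P q q s - (1 - s) * P q (q-1) s
        + ∫ u in (0:ℝ)..s, P q (q-1) u)) := by
    exact intervalIntegral.integral_mono_on ht.1 (P_intble (q+1) (q+1) h0I ht)
      ((P_intble (q+1) q h0I ht).add ((hi1.sub hi2).add hi3)) hpt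
  rw [intervalIntegral.integral_add (P_intble (q+1) q h0I ht) ((hi1.sub hi2).add hi3),
    intervalIntegral.integral_add (hi1.sub hi2) hi3,
    intervalIntegral.integral_sub hi1 hi2] at hI1
  have hFP := FP_P1 q (q-1) ht
  have hw2 : Continuous fun u : ℝ => t - u := continuous_const.sub continuous_id
  have hmono2 : (∫ u in (0:ℝ)..t, (t - u) * P q (q-1) u)
      ≤ ∫ u in (0:ℝ)..t, (1 - u) * P q (q-1) u := by
    apply intervalIntegral.integral_mono_on ht.1 (intble_mulP hw2 q (q-1) h0I ht) hi2
    intro u hu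
    have huI : u ∈ Set.Icc (0:ℝ) 1 := mem_of_Icc0 ht hu
    have := P_nonneg q (q-1) huI.1 huI.2
    nlinarith [ht.2]
  rw [hFP] at hI1
  linarith

lemma intble_prim_w (p k : ℕ) {b : ℝ} (hb : b ∈ Set.Icc (0:ℝ) 1) :
    IntervalIntegrable (fun s => ∫ v in (0:ℝ)..s, (1 - v) * P p k v) volume 0 b := by
  have hw : Continuous fun s : ℝ => 1 - s := continuous_const.sub continuous_id
  have hc : ContinuousOn (fun s => ∫ v in (0:ℝ)..s, (1 - v) * P p k v) (Set.uIcc (0:ℝ) 1) :=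
    intervalIntegral.continuousOn_primitive_interval'
      (intble_mulP hw p k h0I h1I) Set.left_mem_uIcc
  have he : Set.uIcc (0:ℝ) 1 = Set.Icc (0:ℝ) 1 := Set.uIcc_of_le zero_le_one
  rw [he] at hc
  exact (hc.mono (uIcc_sub h0I hb)).intervalIntegrable

/-- the key strict gap between players 1 and 2. -/
lemma B1_lemma (q : ℕ) (hq : 2 ≤ q)
    (Aq : ∀ j, 1 ≤ j → j + 2 ≤ q → ∀ x ∈ Set.Icc (0:ℝ) 1, P q (j+1) x ≤ P q j x)
    {x : ℝ} (hx : x ∈ Set.Icc (0:ℝ) 1) :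
    P (q+1) 2 x + (∫ s in (0:ℝ)..x, ((x - s) * s) * P q q s) ≤ P (q+1) 1 x := by
  have hw : Continuous fun s : ℝ => 1 - s := continuous_const.sub continuous_id
  have hiA : IntervalIntegrable (fun s => (1 - s) * P q q s) volume 0 x :=
    intble_mulP hw q q h0I hx
  have hiB := P_intble q q h0I hx
  have hiC : IntervalIntegrable (fun s => (x - s) * ((1 - s) * P q q s)) volume 0 x :=
    (((continuous_const.sub continuous_id).continuousOn.mul
      (hw.continuousOn.mul (P_contOn q q))).mono (uIcc_sub h0I hx)).intervalIntegrable
  have hiD : IntervalIntegrable (fun s => ((x - s) * s) * P q q s) volume 0 x :=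
    ((((continuous_const.sub continuous_id).mul continuous_id).continuousOn.mul
      (P_contOn q q)).mono (uIcc_sub h0I hx)).intervalIntegrable
  have hiE := intble_prim (q+1) q h0I hx
  have hiF := intble_prim_w q q hx
  -- expansion of P (q+1) 1
  have e1 : P (q+1) 1 x = (∫ t in (0:ℝ)..x, (1 - t) * P q q t)
      + ∫ t in (0:ℝ)..x, (∫ u in (0:ℝ)..t, P (q+1) q u) := by
    rw [P_fe1 (q+1) (by omega) hx]
    rw [show (∫ t in (0:ℝ)..x, P (q+1) (q+1) t)
        = ∫ t in (0:ℝ)..x, ((1 - t) * P q q t + ∫ u in (0:ℝ)..t, P (q+1) q u) from ?_]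
    · exact intervalIntegral.integral_add hiA hiE
    · apply intervalIntegral.integral_congr
      intro t htI
      have h := P_fek (q+1) (q+1) (by omega) (by omega) (mem_of_uIcc hx htI)
      simpa only [Nat.add_sub_cancel] using h
  -- expansion of P (q+1) 2
  have e2 : P (q+1) 2 x = (1 - x) * (∫ v in (0:ℝ)..x, P q q v)
      + ∫ t in (0:ℝ)..x, (∫ u in (0:ℝ)..t, P (q+1) (q+1) u) := by
    have h := P_fek (q+1) 2 (by omega) (by omega) hx
    simp only [Nat.add_sub_cancel, show (2:ℕ) - 1 = 1 from rfl] at h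
    rw [h, P_fe1 q hq hx]
    congr 1
    apply intervalIntegral.integral_congr
    intro t htI
    exact P_fe1 (q+1) (by omega) (mem_of_uIcc hx htI)
  -- bound the inner double integral using ♠
  have e3 : (∫ t in (0:ℝ)..x, (∫ u in (0:ℝ)..t, P (q+1) (q+1) u))
      ≤ (∫ t in (0:ℝ)..x, (∫ u in (0:ℝ)..t, P (q+1) q u))
        + ∫ s in (0:ℝ)..x, (x - s) * ((1 - s) * P q q s) := by
    have hmono : (∫ t in (0:ℝ)..x, (∫ u in (0:ℝ)..t, P (q+1) (q+1) u))
        ≤ ∫ t in (0:ℝ)..x, ((∫ u in (0:ℝ)..t, P (q+1) q u)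
            + ∫ u in (0:ℝ)..t, (1 - u) * P q q u) := by
      apply intervalIntegral.integral_mono_on hx.1 (intble_prim (q+1) (q+1) h0I hx)
        (hiE.add hiF)
      intro t htI
      exact hsp_lemma q hq Aq (mem_of_Icc0 hx htI)
    rw [intervalIntegral.integral_add hiE hiF, FP_P1m q q hx] at hmono
    exact hmono
  -- algebraic recombination
  have e4 : (∫ t in (0:ℝ)..x, (1 - t) * P q q t) - (1 - x) * (∫ v in (0:ℝ)..x, P q q v)
      - (∫ s in (0:ℝ)..x, (x - s) * ((1 - s) * P q q s))
      = ∫ s in (0:ℝ)..x, ((x - s) * s) * P q q s := by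
    rw [show (1 - x) * (∫ v in (0:ℝ)..x, P q q v)
        = ∫ v in (0:ℝ)..x, (1 - x) * P q q v from
      (intervalIntegral.integral_const_mul _ _).symm]
    rw [← intervalIntegral.integral_sub hiA (hiB.const_mul _),
      ← intervalIntegral.integral_sub (hiA.sub (hiB.const_mul _)) hiC]
    apply intervalIntegral.integral_congr
    intro s _
    ring
  linarith [e1, e2, e3, e4]

lemma I4_pos (q : ℕ) (hq : 2 ≤ q) {x : ℝ} (hx0 : 0 < x) (hx1 : x ≤ 1) :
    0 < ∫ s in (0:ℝ)..x, ((x - s) * s) * P q q s := by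
  have hxI : x ∈ Set.Icc (0:ℝ) 1 := ⟨le_of_lt hx0, hx1⟩
  have hiD : IntervalIntegrable (fun s => ((x - s) * s) * P q q s) volume 0 x :=
    ((((continuous_const.sub continuous_id).mul continuous_id).continuousOn.mul
      (P_contOn q q)).mono (uIcc_sub h0I hxI)).intervalIntegrable
  apply intervalIntegral_pos_of_pos_on hiD _ hx0
  intro s hs
  have hs1 : s < 1 := lt_of_lt_of_le hs.2 hx1
  have hP := P_pos_qq q (by omega) hs.1 hs1
  have h1 : 0 < x - s := by linarith [hs.2]
  exact mul_pos (mul_pos h1 hs.1) hP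

lemma weighted_pos {h : ℝ → ℝ} (hi : IntervalIntegrable h volume 0 1)
    (hi2 : IntervalIntegrable (fun s => (1 - s) * h s) volume 0 1)
    (hnn : ∀ s ∈ Set.Icc (0:ℝ) 1, 0 ≤ h s) (hpos : 0 < ∫ s in (0:ℝ)..1, h s) :
    0 < ∫ s in (0:ℝ)..1, (1 - s) * h s := by
  have hIoc : Set.uIoc (0:ℝ) 1 = Set.Ioc (0:ℝ) 1 := Set.uIoc_of_le zero_le_one
  have hae : 0 ≤ᵐ[volume.restrict (Set.uIoc (0:ℝ) 1)] h := by
    rw [hIoc]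
    filter_upwards [ae_restrict_mem measurableSet_Ioc] with s hs
    exact hnn s ⟨le_of_lt hs.1, hs.2⟩
  have hae2 : 0 ≤ᵐ[volume.restrict (Set.uIoc (0:ℝ) 1)]
      (fun s => (1 - s) * h s) := by
    rw [hIoc]
    filter_upwards [ae_restrict_mem measurableSet_Ioc] with s hs
    exact mul_nonneg (by linarith [hs.2]) (hnn s ⟨le_of_lt hs.1, hs.2⟩)
  have h1 := (intervalIntegral.integral_pos_iff_support_of_nonneg_ae' hae hi).mp hpos
  have hss : (Function.support h ∩ Set.Ioc 0 1) \ {(1:ℝ)} ⊆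
      Function.support (fun s => (1 - s) * h s) ∩ Set.Ioc 0 1 := by
    rintro s ⟨⟨hs1, hs2⟩, hs3⟩
    refine ⟨?_, hs2⟩
    simp only [Function.mem_support] at hs1 ⊢
    have : (1:ℝ) - s ≠ 0 := sub_ne_zero.mpr (fun hcon => hs3 (by
      simp [hcon.symm]))
    exact mul_ne_zero this hs1
  have hmeas : volume ((Function.support h ∩ Set.Ioc 0 1) \ {(1:ℝ)})
      = volume (Function.support h ∩ Set.Ioc 0 1) :=
    measure_diff_null (measure_singleton 1)
  refine (intervalIntegral.integral_pos_iff_support_of_nonneg_ae' hae2 hi2).mpr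
    ⟨zero_lt_one, ?_⟩
  calc (0:ENNReal) < volume (Function.support h ∩ Set.Ioc 0 1) := h1.2
    _ = volume ((Function.support h ∩ Set.Ioc 0 1) \ {(1:ℝ)}) := hmeas.symm
    _ ≤ volume (Function.support (fun s => (1 - s) * h s) ∩ Set.Ioc 0 1) :=
        measure_mono hss

theorem chainAB : ∀ q, 2 ≤ q →
    (∀ j, 1 ≤ j → j + 2 ≤ q → ∀ x ∈ Set.Icc (0:ℝ) 1, P q (j+1) x ≤ P q j x) ∧
    (∀ j, 1 ≤ j → j + 2 ≤ q → (∫ x in (0:ℝ)..1, P q (j+1) x) < ∫ x in (0:ℝ)..1, P q j x) := by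
  intro q hq
  induction q, hq using Nat.le_induction with
  | base => exact ⟨fun j hj hj2 => by omega, fun j hj hj2 => by omega⟩
  | succ q hq IH =>
    obtain ⟨Aq, Bq⟩ := IH
    have A1 : ∀ x ∈ Set.Icc (0:ℝ) 1, P (q+1) 2 x ≤ P (q+1) 1 x := by
      intro x hx
      have h := B1_lemma q hq Aq hx
      have h2 : 0 ≤ ∫ s in (0:ℝ)..x, ((x - s) * s) * P q q s := by
        apply intervalIntegral.integral_nonneg hx.1
        intro s hs
        have hsI : s ∈ Set.Icc (0:ℝ) 1 := mem_of_Icc0 hx hs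
        have := P_nonneg q q hsI.1 hsI.2
        exact mul_nonneg (mul_nonneg (by linarith [hs.2]) hs.1) this
      linarith
    have AQ : ∀ j, 1 ≤ j → j + 2 ≤ q + 1 → ∀ x ∈ Set.Icc (0:ℝ) 1,
        P (q+1) (j+1) x ≤ P (q+1) j x := by
      intro j hj
      induction j, hj using Nat.le_induction with
      | base => exact fun _ => A1
      | succ j hj ihj =>
        intro hj2 x hx
        have hfe1 := P_fek (q+1) (j+1+1) (by omega) (by omega) hx
        simp only [Nat.add_sub_cancel] at hfe1
        have hfe2 := P_fek (q+1) (j+1) (by omega) (by omega) hx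
        simp only [Nat.add_sub_cancel] at hfe2
        have hAq : P q (j+1) x ≤ P q j x := Aq j (by omega) (by omega) x hx
        have hIH : (∫ v in (0:ℝ)..x, P (q+1) (j+1) v) ≤ ∫ v in (0:ℝ)..x, P (q+1) j v := by
          apply intervalIntegral.integral_mono_on hx.1 (P_intble (q+1) (j+1) h0I hx)
            (P_intble (q+1) j h0I hx)
          intro v hv
          exact ihj (by omega) v (mem_of_Icc0 hx hv)
        have h1x : 0 ≤ 1 - x := by linarith [hx.2]
        have hmul : (1 - x) * P q (j+1) x ≤ (1 - x) * P q j x :=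
          mul_le_mul_of_nonneg_left hAq h1x
        rw [hfe1, hfe2]
        linarith
    have B1' : (∫ x in (0:ℝ)..1, P (q+1) 2 x) < ∫ x in (0:ℝ)..1, P (q+1) 1 x := by
      have hpos : 0 < ∫ x in (0:ℝ)..1, (P (q+1) 1 x - P (q+1) 2 x) := by
        apply intervalIntegral_pos_of_pos_on
          ((P_intble (q+1) 1 h0I h1I).sub (P_intble (q+1) 2 h0I h1I)) _ zero_lt_one
        intro x hx
        have hxI : x ∈ Set.Icc (0:ℝ) 1 := ⟨le_of_lt hx.1, le_of_lt hx.2⟩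
        have h := B1_lemma q hq Aq hxI
        have h2 := I4_pos q hq hx.1 (le_of_lt hx.2)
        linarith
      rw [intervalIntegral.integral_sub (P_intble (q+1) 1 h0I h1I)
        (P_intble (q+1) 2 h0I h1I)] at hpos
      linarith
    have BQ : ∀ j, 1 ≤ j → j + 2 ≤ q + 1 →
        (∫ x in (0:ℝ)..1, P (q+1) (j+1) x) < ∫ x in (0:ℝ)..1, P (q+1) j x := by
      intro j hj
      induction j, hj using Nat.le_induction with
      | base => exact fun _ => B1'
      | succ j hj ihj =>
        intro hj2
        -- pointwise: P (q+1) (j+1) x - P (q+1) (j+2) x ≥ κ x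
        have step1 : ∀ x ∈ Set.Icc (0:ℝ) 1,
            (∫ v in (0:ℝ)..x, P (q+1) j v) - (∫ v in (0:ℝ)..x, P (q+1) (j+1) v)
              ≤ P (q+1) (j+1) x - P (q+1) (j+1+1) x := by
          intro x hx
          have hfe1 := P_fek (q+1) (j+1+1) (by omega) (by omega) hx
          simp only [Nat.add_sub_cancel] at hfe1
          have hfe2 := P_fek (q+1) (j+1) (by omega) (by omega) hx
          simp only [Nat.add_sub_cancel] at hfe2
          have hAq : P q (j+1) x ≤ P q j x := Aq j (by omega) (by omega) x hx
          have h1x : 0 ≤ 1 - x := by linarith [hx.2]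
          have hmul : (1 - x) * P q (j+1) x ≤ (1 - x) * P q j x :=
            mul_le_mul_of_nonneg_left hAq h1x
          rw [hfe1, hfe2]
          linarith
        have hk1 : IntervalIntegrable (fun x => ∫ v in (0:ℝ)..x, P (q+1) j v) volume 0 1 :=
          intble_prim (q+1) j h0I h1I
        have hk2 : IntervalIntegrable (fun x => ∫ v in (0:ℝ)..x, P (q+1) (j+1) v) volume 0 1 :=
          intble_prim (q+1) (j+1) h0I h1I
        have hstep2 : (∫ x in (0:ℝ)..1, ((∫ v in (0:ℝ)..x, P (q+1) j v)
              - ∫ v in (0:ℝ)..x, P (q+1) (j+1) v))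
            ≤ ∫ x in (0:ℝ)..1, (P (q+1) (j+1) x - P (q+1) (j+1+1) x) := by
          apply intervalIntegral.integral_mono_on zero_le_one (hk1.sub hk2)
            ((P_intble (q+1) (j+1) h0I h1I).sub (P_intble (q+1) (j+1+1) h0I h1I))
          exact step1
        -- evaluate the LHS via FP_P1
        have hw : Continuous fun s : ℝ => 1 - s := continuous_const.sub continuous_id
        have hiWj : IntervalIntegrable (fun s => (1 - s) * P (q+1) j s) volume 0 1 :=
          intble_mulP hw (q+1) j h0I h1I
        have hiWj1 : IntervalIntegrable (fun s => (1 - s) * P (q+1) (j+1) s) volume 0 1 :=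
          intble_mulP hw (q+1) (j+1) h0I h1I
        have hLHS : (∫ x in (0:ℝ)..1, ((∫ v in (0:ℝ)..x, P (q+1) j v)
              - ∫ v in (0:ℝ)..x, P (q+1) (j+1) v))
            = ∫ s in (0:ℝ)..1, (1 - s) * (P (q+1) j s - P (q+1) (j+1) s) := by
          rw [intervalIntegral.integral_sub hk1 hk2, FP_P1 (q+1) j h1I,
            FP_P1 (q+1) (j+1) h1I]
          rw [← intervalIntegral.integral_sub hiWj hiWj1]
          apply intervalIntegral.integral_congr
          intro s _
          ring
        -- strict positivity of the weighted integral
        have hdiffint : IntervalIntegrable (fun s => P (q+1) j s - P (q+1) (j+1) s)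
            volume 0 1 := (P_intble (q+1) j h0I h1I).sub (P_intble (q+1) (j+1) h0I h1I)
        have hdiffint2 : IntervalIntegrable
            (fun s => (1 - s) * (P (q+1) j s - P (q+1) (j+1) s)) volume 0 1 :=
          (hw.continuousOn.mul ((P_contOn (q+1) j).sub (P_contOn (q+1) (j+1)))).mono
            (uIcc_sub h0I h1I) |>.intervalIntegrable
        have hwpos : 0 < ∫ s in (0:ℝ)..1, (1 - s) * (P (q+1) j s - P (q+1) (j+1) s) := by
          apply weighted_pos hdiffint hdiffint2
          · intro s hs
            have := AQ j (by omega) (by omega) s hs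
            linarith
          · have := ihj (by omega)
            rw [intervalIntegral.integral_sub (P_intble (q+1) j h0I h1I)
              (P_intble (q+1) (j+1) h0I h1I)]
            linarith
        rw [hLHS] at hstep2
        have hsplit : (∫ x in (0:ℝ)..1, (P (q+1) (j+1) x - P (q+1) (j+1+1) x))
            = (∫ x in (0:ℝ)..1, P (q+1) (j+1) x) - ∫ x in (0:ℝ)..1, P (q+1) (j+1+1) x :=
          intervalIntegral.integral_sub (P_intble (q+1) (j+1) h0I h1I)
            (P_intble (q+1) (j+1+1) h0I h1I)
        rw [hsplit] at hstep2
        linarith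
    exact ⟨AQ, BQ⟩

/-- In a `p`-player dart game, each player has a strictly greater probability of winning
than the next player: `P_{p,k} > P_{p,k+1}` for `1 ≤ k ≤ p − 1`. -/
theorem P_strict_monotone (p k : ℕ) (hp : 2 ≤ p) (hk1 : 1 ≤ k) (hk : k ≤ p - 1) :
    P p k 1 > P p (k + 1) 1 := by
  obtain ⟨A, B⟩ := chainAB p hp
  rcases eq_or_lt_of_le hk1 with h1 | h1
  · -- k = 1
    subst h1
    have hfe := P_fek p 2 hp le_rfl h1I
    simp only [sub_self, zero_mul, zero_add, show (2:ℕ) - 1 = 1 from rfl] at hfe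
    rw [hfe]
    exact Hc p hp
  · -- 2 ≤ k
    have hk2 : 2 ≤ k := h1
    have hkp : k + 1 ≤ p := by omega
    have hfka := P_fek p (k+1) hp (by omega) h1I
    simp only [sub_self, zero_mul, zero_add, Nat.add_sub_cancel] at hfka
    have hfkb := P_fek p k hp hk2 h1I
    simp only [sub_self, zero_mul, zero_add] at hfkb
    rw [hfka, hfkb]
    have hB := B (k-1) (by omega) (by omega)
    rw [show k - 1 + 1 = k from by omega] at hB
    exact hB
end

section
/- For all integers n ≥ 0, p ≥ 1 and 1 ≤ k ≤ p, the number of permutations of {1,…,n} that encode a complete p-player dart game whose winner is player k equals n!·R_{n,p,k}(1). -/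
open MeasureTheory intervalIntegral

/-- Process a list of throw results (`true` = the thrower stays in the game and moves to
the back of the queue, `false` = the thrower is eliminated) on a queue of players. -/
def playGame : List Bool → List ℕ → List ℕ
  | [], q => q
  | _ :: bs, [] => playGame bs []
  | b :: bs, a :: q => playGame bs (if b then q ++ [a] else q)

/-- The list recording, for each position `i = 1, …, n`, whether position `i` is a
left-to-right minimum of the permutation `π` (i.e. `π i < π j` for all `j < i`). -/
def ltrMins {n : ℕ} (π : Equiv.Perm (Fin n)) : List Bool :=
  (List.finRange n).map fun i => decide (∀ j, j < i → π i < π j)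

/-- `π` encodes a complete `p`-player dart game whose winner is player `k`: starting from
the queue `[1, …, p]`, after all `n` throws exactly player `k` remains, and at least two
players remained before the last throw. -/
def EncodesWin (n p k : ℕ) (π : Equiv.Perm (Fin n)) : Prop :=
  playGame (ltrMins π) (List.range' 1 p) = [k] ∧
    (n = 0 ∨ 2 ≤ (playGame ((ltrMins π).take (n - 1)) (List.range' 1 p)).length)

namespace Darts

open Equiv



theorem playGame_map (f : ℕ → ℕ) : ∀ (bs : List Bool) (q : List ℕ),
    playGame bs (q.map f) = (playGame bs q).map f := by
  intro bs
  induction bs with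
  | nil => intro q; rfl
  | cons b bs ih =>
    intro q
    cases q with
    | nil => simp [playGame]; exact ih []
    | cons a q =>
      cases b <;> simp [playGame] <;>
        [exact ih q;
         (rw [show List.map f q ++ [f a] = (q ++ [a]).map f by simp]; exact ih (q ++ [a]))]

theorem length_playGame_le : ∀ (bs : List Bool) (q : List ℕ),
    (playGame bs q).length ≤ q.length := by
  intro bs
  induction bs with
  | nil => intro q; exact le_refl _
  | cons b bs ih =>
    intro q
    cases q with
    | nil => simpa [playGame] using ih []
    | cons a q =>
      cases b
      · exact le_trans (ih q) (by simp)
      · simpa [playGame] using le_trans (ih (q ++ [a])) (by simp)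

theorem mem_playGame : ∀ (bs : List Bool) (q : List ℕ) (x : ℕ),
    x ∈ playGame bs q → x ∈ q := by
  intro bs
  induction bs with
  | nil => intro q x h; exact h
  | cons b bs ih =>
    intro q x h
    cases q with
    | nil => simpa using (ih [] x (by simpa [playGame] using h))
    | cons a q =>
      cases b
      · exact List.mem_cons_of_mem a (ih q x (by simpa [playGame] using h))
      · have := ih (q ++ [a]) x (by simpa [playGame] using h)
        simp at this ⊢; tauto

theorem map_eq_singleton {α β : Type*} (f : α → β) (l : List α) (k : β) :
    l.map f = [k] ↔ ∃ a, l = [a] ∧ f a = k := by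
  cases l with
  | nil => simp
  | cons a t => cases t <;> simp

theorem rot_queue (p : ℕ) (hp : 1 ≤ p) :
    List.range' 2 (p-1) ++ [1] = (List.range' 1 p).map (fun i => i % p + 1) := by
  obtain ⟨q, rfl⟩ : ∃ q, p = q + 1 := ⟨p - 1, by omega⟩
  rw [List.range'_concat]
  rw [List.map_append]
  congr 1
  · rw [show q + 1 - 1 = q by omega, show (2:ℕ) = 1 + 1 by rfl,
      ← List.map_add_range' (a := 1) 1 q 1]
    apply List.map_congr_left
    intro a ha
    rw [List.mem_range'_1] at ha
    have : a % (q+1) = a := Nat.mod_eq_of_lt (by omega)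
    omega
  · simp only [List.map_cons, List.map_nil, List.cons.injEq, and_true]
    rw [show 1 + 1 * q = q + 1 by omega, Nat.mod_self]

theorem drop_queue (p : ℕ) :
    List.range' 2 (p-1) = (List.range' 1 (p-1)).map (fun i => 1 + i) := by
  rw [List.map_add_range']

theorem range'_eq_cons (p : ℕ) (hp : 1 ≤ p) :
    List.range' 1 p = 1 :: List.range' 2 (p-1) := by
  obtain ⟨q, rfl⟩ : ∃ q, p = q + 1 := ⟨p - 1, by omega⟩
  rw [List.range'_succ]
  rfl

theorem playGame_true (p : ℕ) (hp : 1 ≤ p) (t : List Bool) :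
    playGame (true :: t) (List.range' 1 p)
      = (playGame t (List.range' 1 p)).map (fun i => i % p + 1) := by
  rw [range'_eq_cons p hp]
  show playGame t (List.range' 2 (p-1) ++ [1]) = _
  rw [rot_queue p hp, playGame_map]
  rw [← range'_eq_cons p hp]

theorem playGame_false (p : ℕ) (hp : 1 ≤ p) (t : List Bool) :
    playGame (false :: t) (List.range' 1 p)
      = (playGame t (List.range' 1 (p-1))).map (fun i => 1 + i) := by
  rw [range'_eq_cons p hp]
  show playGame t (List.range' 2 (p-1)) = _
  rw [drop_queue p, playGame_map]

theorem game_rot_iff (p k : ℕ) (hp : 2 ≤ p) (hk1 : 1 ≤ k) (hkp : k ≤ p) (t : List Bool) :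
    playGame (true :: t) (List.range' 1 p) = [k]
      ↔ playGame t (List.range' 1 p) = [if k = 1 then p else k - 1] := by
  rw [playGame_true p (by omega) t, map_eq_singleton]
  constructor
  · rintro ⟨a, ha, hak⟩
    have hmem : a ∈ List.range' 1 p :=
      mem_playGame t _ a (by rw [ha]; exact List.mem_singleton_self a)
    rw [List.mem_range'_1] at hmem
    rw [ha]
    congr 1
    rcases Nat.lt_or_ge a p with h | h
    · have : a % p = a := Nat.mod_eq_of_lt h
      rw [if_neg (by omega)]
      omega
    · have hap : a = p := by omega
      subst hap
      rw [Nat.mod_self] at hak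
      rw [if_pos (by omega)]
  · intro h
    refine ⟨_, h, ?_⟩
    by_cases hk : k = 1
    · rw [if_pos hk, Nat.mod_self, hk]
    · rw [if_neg hk]
      have : (k-1) % p = k - 1 := Nat.mod_eq_of_lt (by omega)
      omega

theorem game_drop_iff (p k : ℕ) (hp : 2 ≤ p) (hk1 : 2 ≤ k) (t : List Bool) :
    playGame (false :: t) (List.range' 1 p) = [k]
      ↔ playGame t (List.range' 1 (p-1)) = [k - 1] := by
  rw [playGame_false p (by omega) t, map_eq_singleton]
  constructor
  · rintro ⟨a, ha, hak⟩
    rw [ha]; congr 1; omega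
  · intro h
    exact ⟨_, h, by omega⟩

theorem game_drop_one (p : ℕ) (hp : 2 ≤ p) (t : List Bool) :
    ¬ playGame (false :: t) (List.range' 1 p) = [1] := by
  rw [playGame_false p (by omega) t, map_eq_singleton]
  rintro ⟨a, ha, hak⟩
  have hmem : a ∈ List.range' 1 (p-1) :=
    mem_playGame t _ a (by rw [ha]; exact List.mem_singleton_self a)
  rw [List.mem_range'_1] at hmem
  omega



/-- pattern of left-to-right minima with an initial threshold `m` -/
def ltrMinsM {n : ℕ} (m : ℕ) (π : Equiv.Perm (Fin n)) : List Bool :=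
  (List.finRange n).map fun i => decide ((π i : ℕ) < m ∧ ∀ j, j < i → π i < π j)

/-- insert `v` at the front of `τ` -/
def insFun {n : ℕ} (v : Fin (n+1)) (τ : Equiv.Perm (Fin n)) : Fin (n+1) → Fin (n+1) :=
  Fin.cons v (fun i => v.succAbove (τ i))

theorem insFun_injective {n : ℕ} (v : Fin (n+1)) (τ : Equiv.Perm (Fin n)) :
    Function.Injective (insFun v τ) := by
  intro a b hab
  induction a using Fin.cases <;> induction b using Fin.cases <;>
    simp only [insFun, Fin.cons_zero, Fin.cons_succ] at hab
  · rfl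
  · exact absurd hab.symm (Fin.succAbove_ne v _)
  · exact absurd hab (Fin.succAbove_ne v _)
  · rw [Fin.succAbove_right_injective.eq_iff, τ.injective.eq_iff] at hab
    rw [hab]

noncomputable def insPerm {n : ℕ} (v : Fin (n+1)) (τ : Equiv.Perm (Fin n)) :
    Equiv.Perm (Fin (n+1)) :=
  Equiv.ofBijective _ ((Finite.injective_iff_bijective).mp (insFun_injective v τ))

@[simp] theorem insPerm_zero {n : ℕ} (v : Fin (n+1)) (τ : Equiv.Perm (Fin n)) :
    insPerm v τ 0 = v := rfl

@[simp] theorem insPerm_succ {n : ℕ} (v : Fin (n+1)) (τ : Equiv.Perm (Fin n)) (i : Fin n) :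
    insPerm v τ i.succ = v.succAbove (τ i) := by
  simp [insPerm, Equiv.ofBijective, insFun]

/-- the key structural lemma for patterns -/
theorem ltrMinsM_insPerm {n : ℕ} (m : ℕ) (v : Fin (n+1)) (τ : Equiv.Perm (Fin n)) :
    ltrMinsM m (insPerm v τ) = decide ((v:ℕ) < m) :: ltrMinsM (min (v:ℕ) m) τ := by
  rw [ltrMinsM, List.finRange_succ, List.map_cons, List.map_map]
  congr 1
  · simp only [insPerm_zero]
    refine decide_eq_decide.mpr ?_
    constructor
    · exact fun h => h.1
    · exact fun h => ⟨h, fun j hj => absurd hj (Fin.not_lt_zero j)⟩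
  · rw [ltrMinsM]
    apply List.map_congr_left
    intro i _
    simp only [Function.comp_apply, insPerm_succ, decide_eq_decide]
    have hlt : ∀ a : Fin n, v.succAbove a < v ↔ (a : ℕ) < (v : ℕ) := by
      intro a
      rcases lt_or_ge (a.castSucc) v with h | h
      · rw [Fin.succAbove_of_castSucc_lt v a h, Fin.lt_iff_val_lt_val, Fin.coe_castSucc]
      · rw [Fin.succAbove_of_le_castSucc v a h, Fin.lt_iff_val_lt_val, Fin.val_succ]
        rw [Fin.le_iff_val_le_val, Fin.coe_castSucc] at h
        omega
    have hval : ((v.succAbove (τ i) : Fin (n+1)) : ℕ) = if ((τ i):ℕ) < (v:ℕ) then ((τ i):ℕ) else ((τ i):ℕ) + 1 := by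
      rcases lt_or_ge ((τ i).castSucc) v with h | h
      · rw [Fin.succAbove_of_castSucc_lt v _ h]
        simp only [Fin.lt_iff_val_lt_val, Fin.coe_castSucc] at h ⊢
        rw [if_pos h]
      · rw [Fin.succAbove_of_le_castSucc v _ h]
        simp only [Fin.le_iff_val_le_val, Fin.coe_castSucc] at h
        rw [Fin.val_succ, if_neg (by omega)]
    constructor
    · rintro ⟨h1, h2⟩
      have hv : (τ i : ℕ) < (v : ℕ) := by
        rw [← hlt]
        exact h2 0 (Fin.succ_pos i)
      refine ⟨by rw [hval, if_pos hv] at h1; omega, ?_⟩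
      intro l hl
      have := h2 l.succ (by rwa [Fin.succ_lt_succ_iff])
      rw [insPerm_succ] at this
      rwa [Fin.succAbove_lt_succAbove_iff] at this
    · rintro ⟨h1, h2⟩
      have hv : (τ i : ℕ) < (v : ℕ) := lt_of_lt_of_le h1 (min_le_left _ _)
      have hm : (τ i : ℕ) < m := lt_of_lt_of_le h1 (min_le_right _ _)
      refine ⟨by rw [hval, if_pos hv]; exact hm, ?_⟩
      intro j hj
      induction j using Fin.cases with
      | zero => exact (hlt _).mpr hv
      | succ l =>
        rw [insPerm_succ, Fin.succAbove_lt_succAbove_iff]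
        exact h2 l (by rwa [Fin.succ_lt_succ_iff] at hj)


noncomputable def insEquiv (n : ℕ) : (Fin (n+1) × Equiv.Perm (Fin n)) ≃ Equiv.Perm (Fin (n+1)) := by
  apply Equiv.ofBijective (fun x => insPerm x.1 x.2)
  rw [Fintype.bijective_iff_injective_and_card]
  constructor
  · rintro ⟨v, τ⟩ ⟨w, υ⟩ h
    simp only at h
    have h0 : v = w := by
      have := congrArg (fun e => e 0) (congrArg (Equiv.toFun) h)
      simpa [insPerm, Equiv.ofBijective, insFun] using this
    subst h0
    have : τ = υ := by
      apply Equiv.ext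
      intro i
      have := congrArg (fun e => e i.succ) (congrArg (Equiv.toFun) h)
      simp only [insPerm, Equiv.ofBijective, insFun, Fin.cons_succ] at this
      exact Fin.succAbove_right_injective this
    rw [this]
  · simp [Fintype.card_perm, Nat.factorial_succ]

theorem card_split (n : ℕ) (P : Equiv.Perm (Fin (n+1)) → Prop) :
    Nat.card {π : Equiv.Perm (Fin (n+1)) // P π}
      = ∑ v : Fin (n+1), Nat.card {τ : Equiv.Perm (Fin n) // P (insPerm v τ)} := by
  classical
  have e1 : {π : Equiv.Perm (Fin (n+1)) // P π}
      ≃ {x : Fin (n+1) × Equiv.Perm (Fin n) // P (insPerm x.1 x.2)} :=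
    (Equiv.subtypeEquiv (insEquiv n) (fun x => Iff.rfl)).symm
  have e2 := Equiv.subtypeProdEquivSigmaSubtype
    (fun (v : Fin (n+1)) (τ : Equiv.Perm (Fin n)) => P (insPerm v τ))
  rw [Nat.card_congr (e1.trans e2)]
  simp [Nat.card_eq_fintype_card]

def A : ℕ → ℕ → ℕ → ℕ → ℕ
  | 0, _, p, k => if p = 1 ∧ k = 1 then 1 else 0
  | n+1, m, p, k =>
      if p ≤ 1 then 0
      else if k = 1 then ∑ j ∈ Finset.range m, A n j p p
      else (n + 1 - m) * A n m (p-1) (k-1) + ∑ j ∈ Finset.range m, A n j p (k-1)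

def Cond (n m p k : ℕ) (π : Equiv.Perm (Fin n)) : Prop :=
  playGame (ltrMinsM m π) (List.range' 1 p) = [k] ∧
    (n = 0 ∨ 2 ≤ (playGame ((ltrMinsM m π).take (n - 1)) (List.range' 1 p)).length)

theorem sum_split (N m : ℕ) (hm : m ≤ N + 1) (g : ℕ → ℕ) (c : ℕ) :
    ∑ j ∈ Finset.range (N+1), (if j < m then g j else c)
      = (∑ j ∈ Finset.range m, g j) + (N + 1 - m) * c := by
  rw [Finset.range_eq_Ico, ← Finset.sum_Ico_consecutive _ (Nat.zero_le m) hm]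
  congr 1
  · rw [← Finset.range_eq_Ico]
    exact Finset.sum_congr rfl (fun j hj => if_pos (Finset.mem_range.mp hj))
  · rw [Finset.sum_congr rfl
      (fun j hj => if_neg (by rw [Finset.mem_Ico] at hj; omega)),
      Finset.sum_const, Nat.card_Ico, smul_eq_mul]

set_option linter.unnecessarySeqFocus false in
theorem key (n : ℕ) : ∀ (m p k : ℕ), m ≤ n → 1 ≤ p → 1 ≤ k → k ≤ p →
    Nat.card {π : Equiv.Perm (Fin n) // Cond n m p k π} = A n m p k := by
  induction n with
  | zero =>
    intro m p k _ hp hk1 hkp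
    have hLM : ∀ π : Equiv.Perm (Fin 0), ltrMinsM m π = [] := fun π => by
      simp [ltrMinsM]
    by_cases hpk : p = 1 ∧ k = 1
    · obtain ⟨hp1, hk1'⟩ := hpk
      subst hp1; subst hk1'
      have hall : ∀ π : Equiv.Perm (Fin 0), Cond 0 m 1 1 π := by
        intro π
        exact ⟨by rw [hLM]; rfl, Or.inl rfl⟩
      rw [Nat.card_congr (Equiv.subtypeUnivEquiv hall)]
      simp [A, Nat.card_eq_fintype_card]
    · have hnone : ∀ π : Equiv.Perm (Fin 0), ¬ Cond 0 m p k π := by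
        rintro π ⟨h1, _⟩
        rw [hLM, show playGame [] (List.range' 1 p) = List.range' 1 p from rfl] at h1
        have hlen := congrArg List.length h1
        simp only [List.length_range', List.length_singleton] at hlen
        subst hlen
        have hk : 1 = k := by injection (show [1] = [k] from h1)
        exact hpk ⟨rfl, hk.symm⟩
      haveI : IsEmpty {π : Equiv.Perm (Fin 0) // Cond 0 m p k π} :=
        ⟨fun x => hnone x.1 x.2⟩
      rw [Nat.card_of_isEmpty]
      simp [A, hpk]
  | succ n ih =>
    intro m p k hm hp hk1 hkp
    by_cases hp2 : p ≤ 1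
    · have hp1 : p = 1 := le_antisymm hp2 hp
      subst hp1
      have hnone : ∀ π : Equiv.Perm (Fin (n+1)), ¬ Cond (n+1) m 1 k π := by
        rintro π ⟨h1, h2⟩
        rcases h2 with h2 | h2
        · exact Nat.succ_ne_zero n h2
        · have hle := length_playGame_le ((ltrMinsM m π).take (n+1-1)) (List.range' 1 1)
          simp only [List.length_range'] at hle
          omega
      haveI : IsEmpty {π : Equiv.Perm (Fin (n+1)) // Cond (n+1) m 1 k π} :=
        ⟨fun x => hnone x.1 x.2⟩
      rw [Nat.card_of_isEmpty]
      simp [A]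
    push_neg at hp2
    rw [card_split n (Cond (n+1) m p k)]
    have hcount : ∀ v : Fin (n+1),
        Nat.card {τ : Equiv.Perm (Fin n) // Cond (n+1) m p k (insPerm v τ)}
          = if (v:ℕ) < m then A n (v:ℕ) p (if k = 1 then p else k - 1)
            else (if k = 1 then 0 else A n m (p-1) (k-1)) := by
      intro v
      by_cases hv : (v:ℕ) < m
      · rw [if_pos hv]
        have hiff : ∀ τ : Equiv.Perm (Fin n),
            Cond (n+1) m p k (insPerm v τ) ↔ Cond n (v:ℕ) p (if k = 1 then p else k - 1) τ := by
          intro τ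
          unfold Cond
          rw [ltrMinsM_insPerm, min_eq_left (le_of_lt hv), decide_eq_true hv]
          apply and_congr
          · exact game_rot_iff p k (by omega) hk1 hkp _
          · cases n with
            | zero =>
              apply iff_of_true
              · exact Or.inr (by
                  show 2 ≤ (playGame [] (List.range' 1 p)).length
                  show 2 ≤ (List.range' 1 p).length
                  simp only [List.length_range']
                  omega)
              · exact Or.inl rfl
            | succ n' =>
              simp only [Nat.succ_ne_zero, false_or, Nat.add_sub_cancel,
                List.take_succ_cons]
              rw [playGame_true p (by omega), List.length_map]
        rw [Nat.card_congr (Equiv.subtypeEquivRight hiff)]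
        refine ih (v:ℕ) p (if k = 1 then p else k - 1) (by omega) hp ?_ ?_
        · by_cases hk : k = 1 <;> simp [hk] <;> omega
        · by_cases hk : k = 1 <;> simp [hk] <;> omega
      · rw [if_neg hv]
        push_neg at hv
        by_cases hk : k = 1
        · subst hk
          rw [if_pos rfl]
          have hnone : ∀ τ : Equiv.Perm (Fin n), ¬ Cond (n+1) m p 1 (insPerm v τ) := by
            rintro τ ⟨h1, _⟩
            rw [ltrMinsM_insPerm, min_eq_right hv,
              decide_eq_false (by omega)] at h1
            exact game_drop_one p (by omega) _ h1
          haveI : IsEmpty {τ : Equiv.Perm (Fin n) // Cond (n+1) m p 1 (insPerm v τ)} :=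
            ⟨fun x => hnone x.1 x.2⟩
          exact Nat.card_of_isEmpty
        · rw [if_neg hk]
          have hiff : ∀ τ : Equiv.Perm (Fin n),
              Cond (n+1) m p k (insPerm v τ) ↔ Cond n m (p-1) (k-1) τ := by
            intro τ
            unfold Cond
            rw [ltrMinsM_insPerm, min_eq_right hv, decide_eq_false (by omega)]
            apply and_congr
            · exact game_drop_iff p k (by omega) (by omega) _
            · cases n with
              | zero =>
                apply iff_of_true
                · exact Or.inr (by
                    show 2 ≤ (playGame [] (List.range' 1 p)).length
                    show 2 ≤ (List.range' 1 p).length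
                    simp only [List.length_range']
                    omega)
                · exact Or.inl rfl
              | succ n' =>
                simp only [Nat.succ_ne_zero, false_or, Nat.add_sub_cancel,
                  List.take_succ_cons]
                rw [playGame_false p (by omega), List.length_map]
          rw [Nat.card_congr (Equiv.subtypeEquivRight hiff)]
          have hmn : m ≤ n := le_trans hv (Nat.lt_succ_iff.mp v.isLt)
          exact ih m (p-1) (k-1) hmn (by omega) (by omega) (by omega)
    simp_rw [hcount]
    rw [Fin.sum_univ_eq_sum_range
      (fun j => if j < m then A n j p (if k = 1 then p else k - 1)
        else (if k = 1 then 0 else A n m (p-1) (k-1))) (n+1)]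
    rw [sum_split n m hm]
    show _ = A (n+1) m p k
    by_cases hk : k = 1
    · subst hk
      simp only [if_pos rfl, A, if_neg (by omega : ¬ p ≤ 1)]
      simp
    · simp only [if_neg hk, A, if_neg (by omega : ¬ p ≤ 1)]
      omega



noncomputable def Bern (n m : ℕ) (x : ℝ) : ℝ := (n.choose m : ℝ) * x^m * (1-x)^(n-m)

theorem bern_cont (n m : ℕ) : Continuous (Bern n m) := by
  unfold Bern; fun_prop

noncomputable def Tt (n : ℕ) (m : ℕ) (y : ℝ) : ℝ :=
  (n+1:ℝ) * ((n.choose (m-1):ℝ) * y^(m-1) * (1-y)^(n+1-m))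

theorem hasDerivAt_bern (n m : ℕ) (hm : 1 ≤ m) (hm2 : m ≤ n+1) (y : ℝ) :
    HasDerivAt (fun t => Bern (n+1) m t) (Tt n m y - Tt n (m+1) y) y := by
  have h1 : HasDerivAt (fun t : ℝ => t^m) ((m:ℝ) * y^(m-1)) y := hasDerivAt_pow m y
  have hsub : HasDerivAt (fun t : ℝ => 1 - t) (-1 : ℝ) y := by
    simpa using (hasDerivAt_id y).const_sub 1
  have h2 : HasDerivAt (fun t : ℝ => (1-t)^(n+1-m))
      (((n+1-m : ℕ):ℝ) * (1-y)^(n+1-m-1) * (-1)) y := by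
    exact_mod_cast (HasDerivAt.fun_pow hsub (n+1-m))
  have h := ((h1.fun_mul h2).const_mul (((n+1).choose m : ℕ) : ℝ))
  have hkey : HasDerivAt (fun t => Bern (n+1) m t)
      (((n+1).choose m : ℝ) * (((m:ℝ) * y^(m-1)) * (1-y)^(n+1-m)
        + y^m * (((n+1-m : ℕ):ℝ) * (1-y)^(n+1-m-1) * (-1)))) y := by
    refine h.congr_of_eventuallyEq (Filter.Eventually.of_forall fun t => ?_)
    unfold Bern
    ring
  have e1 : ((n+1).choose m : ℝ) * (m:ℝ) = (n+1:ℝ) * (n.choose (m-1):ℝ) := by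
    have h' := Nat.add_one_mul_choose_eq n (m-1)
    rw [show m-1+1 = m by omega] at h'
    have := congrArg (fun z : ℕ => (z : ℝ)) h'
    push_cast at this
    linarith
  have e2 : ((n+1).choose m : ℝ) * ((n+1-m : ℕ):ℝ) = (n+1:ℝ) * (n.choose m:ℝ) := by
    have h' := Nat.choose_mul_succ_eq n m
    have := congrArg (fun z : ℕ => (z : ℝ)) h'
    push_cast [Nat.cast_sub hm2] at this ⊢
    linarith
  convert hkey using 1
  unfold Tt
  rw [show n+1-m-1 = n-m by omega, show m+1-1 = m from rfl,
    show n+1-(m+1) = n-m by omega]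
  push_cast [Nat.cast_sub hm2] at e1 e2 ⊢
  linear_combination (y^m * (1-y)^(n-m)) * e2 - (y^(m-1)*(1-y)^(n+1-m)) * e1

theorem tele (f : ℕ → ℝ) (a b : ℕ) (h : a ≤ b) :
    ∑ m ∈ Finset.Ico a b, (f m - f (m+1)) = f a - f b := by
  rw [Finset.sum_Ico_eq_sum_range]
  have := Finset.sum_range_sub' (fun i => f (a+i)) (b-a)
  rw [show ∑ k ∈ Finset.range (b-a), (f (a+k) - f (a+k+1))
      = ∑ i ∈ Finset.range (b-a), ((fun i => f (a+i)) i - (fun i => f (a+i)) (i+1)) from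
    Finset.sum_congr rfl (fun i _ => by simp [Nat.add_assoc]), this,
    Nat.add_sub_cancel' h]
  simp

theorem integral_bern (n j : ℕ) (hj : j ≤ n) (x : ℝ) :
    ∫ v in (0:ℝ)..x, Bern n j v
      = ((n:ℝ)+1)⁻¹ * ∑ m ∈ Finset.Ico (j+1) (n+2), Bern (n+1) m x := by
  have hF : ∀ y ∈ Set.uIcc (0:ℝ) x,
      HasDerivAt (fun t => ((n:ℝ)+1)⁻¹ * ∑ m ∈ Finset.Ico (j+1) (n+2), Bern (n+1) m t)
        (Bern n j y) y := by
    intro y _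
    have hsum : HasDerivAt (fun t => ∑ m ∈ Finset.Ico (j+1) (n+2), Bern (n+1) m t)
        (∑ m ∈ Finset.Ico (j+1) (n+2), (Tt n m y - Tt n (m+1) y)) y := by
      apply HasDerivAt.fun_sum
      intro m hmm
      rw [Finset.mem_Ico] at hmm
      exact hasDerivAt_bern n m (by omega) (by omega) y
    rw [tele _ _ _ (by omega)] at hsum
    have hTend : Tt n (n+2) y = 0 := by
      unfold Tt
      rw [show n+2-1 = n+1 by omega, Nat.choose_eq_zero_of_lt (by omega)]
      simp
    have hTstart : Tt n (j+1) y = ((n:ℝ)+1) * Bern n j y := by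
      unfold Tt Bern
      rw [show j+1-1 = j from rfl, show n+1-(j+1) = n-j by omega]
    rw [hTend, hTstart, sub_zero] at hsum
    have := hsum.const_mul (((n:ℝ)+1)⁻¹)
    have hne : ((n:ℝ)+1) ≠ 0 := by positivity
    rwa [← mul_assoc, inv_mul_cancel₀ hne, one_mul] at this
  rw [intervalIntegral.integral_eq_sub_of_hasDerivAt hF
    ((bern_cont n j).intervalIntegrable 0 x)]
  have h0 : ∑ m ∈ Finset.Ico (j+1) (n+2), Bern (n+1) m 0 = 0 := by
    apply Finset.sum_eq_zero
    intro m hmm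
    rw [Finset.mem_Ico] at hmm
    unfold Bern
    rw [zero_pow (by omega)]
    ring
  rw [h0]
  ring


theorem sum_ite_Ico (a b : ℕ) (g : ℕ → ℝ) :
    ∑ l ∈ Finset.Ico a b, g l = ∑ l ∈ Finset.range b, if a ≤ l then g l else 0 := by
  rw [show Finset.Ico a b = (Finset.range b).filter (fun l => a ≤ l) from by
    ext l; simp [Finset.mem_Ico, Finset.mem_filter]; omega,
    Finset.sum_filter]

theorem sum_ite_range (N l : ℕ) (hl : l ≤ N) (g : ℕ → ℝ) :
    ∑ j ∈ Finset.range N, (if j < l then g j else 0) = ∑ j ∈ Finset.range l, g j := by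
  rw [← Finset.sum_subset (Finset.range_subset_range.mpr hl)
    (fun x _ hxl => if_neg (fun hc => hxl (Finset.mem_range.mpr hc)))]
  exact Finset.sum_congr rfl (fun j hj => if_pos (Finset.mem_range.mp hj))

theorem bern_mul (n m : ℕ) (hm : m ≤ n) (x : ℝ) :
    ((n:ℝ)+1) * ((1-x) * Bern n m x) = ((n+1-m : ℕ):ℝ) * Bern (n+1) m x := by
  have h' := Nat.choose_mul_succ_eq n m
  have hc : ((n.choose m : ℕ):ℝ) * ((n:ℝ)+1) = ((n+1).choose m : ℝ) * ((n+1-m : ℕ):ℝ) := by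
    exact_mod_cast congrArg (fun z : ℕ => (z:ℝ)) h'
  unfold Bern
  rw [show n+1-m = (n-m)+1 by omega] at hc ⊢
  rw [pow_succ]
  linear_combination (x^m * (1-x)^(n-m) * (1-x)) * hc

theorem R_eq (n : ℕ) : ∀ (p k : ℕ) (x : ℝ),
    R n p k x = (n.factorial : ℝ)⁻¹ *
      ∑ m ∈ Finset.range (n+1), (A n m p k : ℝ) * Bern n m x := by
  induction n with
  | zero =>
    intro p k x
    by_cases hpk : p = 1 ∧ k = 1 <;> simp [R, A, hpk, Bern]
  | succ n ih =>
    intro p k x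
    have hint : ∀ (c : ℕ), (∫ v in (0:ℝ)..x, R n p c v)
        = (n.factorial : ℝ)⁻¹ * ((n:ℝ)+1)⁻¹ *
          ∑ l ∈ Finset.range (n+2),
            (∑ j ∈ Finset.range l, (A n j p c : ℝ)) * Bern (n+1) l x := by
      intro c
      rw [intervalIntegral.integral_congr (g := fun v => (n.factorial : ℝ)⁻¹ *
        ∑ m ∈ Finset.range (n+1), (A n m p c : ℝ) * Bern n m v)
        (fun v _ => ih p c v)]
      rw [intervalIntegral.integral_const_mul]
      rw [intervalIntegral.integral_finset_sum (f := fun m v => (A n m p c : ℝ) * Bern n m v)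
        (fun m _ => ((continuous_const.mul (bern_cont n m)).intervalIntegrable 0 x))]
      have hterm : ∀ m ∈ Finset.range (n+1),
          (∫ v in (0:ℝ)..x, (A n m p c : ℝ) * Bern n m v)
            = ((n:ℝ)+1)⁻¹ * ∑ l ∈ Finset.range (n+2),
                (if m < l then (A n m p c : ℝ) * Bern (n+1) l x else 0) := by
        intro m hm
        rw [intervalIntegral.integral_const_mul,
          integral_bern n m (by simpa [Nat.lt_succ_iff] using hm) x,
          sum_ite_Ico (m+1) (n+2) (fun l => Bern (n+1) l x)]
        rw [← mul_assoc, mul_comm ((A n m p c : ℝ)) (((n:ℝ)+1)⁻¹), mul_assoc]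
        congr 1
        rw [Finset.mul_sum]
        apply Finset.sum_congr rfl
        intro l _
        by_cases hml : m < l
        · rw [if_pos (Nat.succ_le_of_lt hml), if_pos hml]
        · rw [if_neg (fun h => hml (Nat.lt_of_succ_le h)), if_neg hml, mul_zero]
      rw [Finset.sum_congr rfl hterm, ← Finset.mul_sum, ← mul_assoc]
      congr 1
      rw [Finset.sum_comm]
      apply Finset.sum_congr rfl
      intro l hl
      have hl' : l ≤ n+1 := by simpa [Nat.lt_succ_iff] using hl
      rw [Finset.sum_mul]
      rw [← sum_ite_range (n+1) l hl' (fun j => (A n j p c : ℝ) * Bern (n+1) l x)]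
    by_cases hp : p ≤ 1
    · rw [show R (n+1) p k x = 0 from by rw [R, if_pos hp]]
      have hz : ∀ m ∈ Finset.range (n+2), (A (n+1) m p k : ℝ) * Bern (n+1) m x = 0 := by
        intro m _
        rw [show A (n+1) m p k = 0 from by rw [A, if_pos hp]]
        simp
      rw [Finset.sum_congr rfl hz]
      simp
    · by_cases hk : k = 1
      · subst hk
        rw [show R (n+1) p 1 x = ∫ v in (0:ℝ)..x, R n p p v from by
          rw [R, if_neg hp, if_pos rfl]]
        rw [hint p]
        have hA : ∀ l ∈ Finset.range (n+2),
            (A (n+1) l p 1 : ℝ) * Bern (n+1) l x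
              = (∑ j ∈ Finset.range l, (A n j p p : ℝ)) * Bern (n+1) l x := by
          intro l _
          rw [show A (n+1) l p 1 = ∑ j ∈ Finset.range l, A n j p p from by
            rw [A, if_neg hp, if_pos rfl]]
          push_cast
          ring
        rw [Finset.sum_congr rfl hA, Nat.factorial_succ]
        push_cast
        rw [mul_inv]
        ring
      · rw [show R (n+1) p k x = (1 - x) * R n (p - 1) (k - 1) x
            + ∫ v in (0:ℝ)..x, R n p (k - 1) v from by
          rw [R, if_neg hp, if_neg hk]]
        rw [hint (k-1), ih (p-1) (k-1) x]
        have hne : ((n:ℝ)+1) ≠ 0 := by positivity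
        have hsum : ((n:ℝ)+1) * ((1-x) * (∑ m ∈ Finset.range (n+1),
              (A n m (p-1) (k-1) : ℝ) * Bern n m x))
            = ∑ m ∈ Finset.range (n+1),
                ((n+1-m : ℕ):ℝ) * (A n m (p-1) (k-1) : ℝ) * Bern (n+1) m x := by
          rw [Finset.mul_sum, Finset.mul_sum]
          apply Finset.sum_congr rfl
          intro m hm
          have hb := bern_mul n m (by simpa [Nat.lt_succ_iff] using hm) x
          linear_combination (A n m (p-1) (k-1) : ℝ) * hb
        have hE1 : (1-x) * ((n.factorial : ℝ)⁻¹ *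
            ∑ m ∈ Finset.range (n+1), (A n m (p-1) (k-1) : ℝ) * Bern n m x)
            = (n.factorial : ℝ)⁻¹ * ((n:ℝ)+1)⁻¹ *
              ∑ l ∈ Finset.range (n+2),
                ((n+1-l : ℕ):ℝ) * (A n l (p-1) (k-1) : ℝ) * Bern (n+1) l x := by
          rw [Finset.sum_range_succ (fun l =>
            ((n+1-l : ℕ):ℝ) * (A n l (p-1) (k-1) : ℝ) * Bern (n+1) l x) (n+1)]
          rw [Nat.sub_self]
          simp only [Nat.cast_zero, zero_mul, add_zero]
          rw [← hsum]
          field_simp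
        rw [hE1, ← mul_add, ← Finset.sum_add_distrib]
        have hAc : ∀ l ∈ Finset.range (n+2),
            ((n+1-l : ℕ):ℝ) * (A n l (p-1) (k-1) : ℝ) * Bern (n+1) l x
              + (∑ j ∈ Finset.range l, (A n j p (k-1) : ℝ)) * Bern (n+1) l x
            = (A (n+1) l p k : ℝ) * Bern (n+1) l x := by
          intro l _
          rw [show A (n+1) l p k = (n + 1 - l) * A n l (p-1) (k-1)
              + ∑ j ∈ Finset.range l, A n j p (k-1) from by
            rw [A, if_neg hp, if_neg hk]]
          push_cast
          ring
        rw [Finset.sum_congr rfl hAc, Nat.factorial_succ]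
        push_cast
        rw [mul_inv]
        ring

theorem R_one (n p k : ℕ) :
    (n.factorial : ℝ) * ((n.factorial : ℝ)⁻¹ *
      ∑ m ∈ Finset.range (n+1), (A n m p k : ℝ) * Bern n m 1) = (A n n p k : ℝ) := by
  have hB : ∀ m ∈ Finset.range (n+1), m ≠ n → (A n m p k : ℝ) * Bern n m 1 = 0 := by
    intro m hm hmn
    have h0 : n - m ≠ 0 := by
      rw [Finset.mem_range, Nat.lt_succ_iff] at hm
      omega
    unfold Bern
    rw [show ((1:ℝ)-1) = 0 by ring, zero_pow h0]
    ring
  rw [Finset.sum_eq_single_of_mem n (Finset.self_mem_range_succ n) hB]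
  unfold Bern
  rw [Nat.choose_self, Nat.sub_self]
  have hne : ((n.factorial : ℕ):ℝ) ≠ 0 := by
    exact_mod_cast Nat.factorial_ne_zero n
  field_simp
  simp

end Darts

/-- The number of permutations of `{1, …, n}` encoding a complete `p`-player dart game
won by player `k` equals `n!·R_{n,p,k}(1)`. -/
theorem card_encodesWin (n p k : ℕ) (hp : 1 ≤ p) (hk1 : 1 ≤ k) (hkp : k ≤ p) :
    ({π : Equiv.Perm (Fin n) | EncodesWin n p k π}.ncard : ℝ)
      = (Nat.factorial n : ℝ) * R n p k 1 := by
  have hEC : ∀ π : Equiv.Perm (Fin n), EncodesWin n p k π ↔ Darts.Cond n n p k π := by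
    intro π
    have hL : ltrMins π = Darts.ltrMinsM n π := by
      unfold ltrMins Darts.ltrMinsM
      apply List.map_congr_left
      intro i _
      rw [decide_eq_decide]
      exact ⟨fun h => ⟨(π i).isLt, h⟩, fun h => h.2⟩
    unfold EncodesWin Darts.Cond
    rw [hL]
  have hNc : ({π : Equiv.Perm (Fin n) | EncodesWin n p k π}.ncard) = Darts.A n n p k := by
    rw [← Nat.card_coe_set_eq]
    rw [show (Nat.card ↥{π : Equiv.Perm (Fin n) | EncodesWin n p k π})
        = Nat.card {π : Equiv.Perm (Fin n) // Darts.Cond n n p k π} from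
      Nat.card_congr (Equiv.subtypeEquivRight hEC)]
    exact Darts.key n n p k le_rfl hp hk1 hkp
  rw [hNc, Darts.R_eq n p k 1]
  exact (Darts.R_one n p k).symm
end

section
/- Let w_{n,p,k,s} denote the number of permutations π of {1,…,n} that encode a complete p-player dart game whose winner is player k and that satisfy π(1) = s. Then for all integers n ≥ 3, p ≥ 2, 1 ≤ k ≤ p and 1 ≤ s ≤ n: if k = 1, then w_{n,p,1,s} = ∑_{s'=1}^{s−1} w_{n−1,p,p,s'} + (n−s)·w_{n−1,p−1,1,s}; if k = 2, then w_{n,p,2,s} = ∑_{s'=1}^{s−1} w_{n−1,p,1,s'}; and if 3 ≤ k ≤ p, then w_{n,p,k,s} = ∑_{s'=1}^{s−1} w_{n−1,p,k−1,s'} + (n−s)·w_{n−1,p−1,k−1,s}. -/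
/-- `w n p k s` : the number of permutations `π` of `{1, …, n}` encoding a complete
`p`-player dart game won by player `k` and whose first entry is `π(1) = s`
(entries taken in `{1, …, n}`). -/
noncomputable def w (n p k s : ℕ) : ℕ :=
  {π : Equiv.Perm (Fin n) | EncodesWin n p k π ∧
      ∀ i : Fin n, (i : ℕ) = 0 → (π i : ℕ) + 1 = s}.ncard

namespace Dart
open Equiv


lemma playGame_map (f : ℕ → ℕ) : ∀ (bs : List Bool) (q : List ℕ),
    playGame bs (q.map f) = (playGame bs q).map f := by
  intro bs
  induction bs with
  | nil => intro q; rfl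
  | cons b bs ih =>
    intro q
    cases q with
    | nil => simpa [playGame] using ih []
    | cons a q =>
      cases b <;> simp [playGame, ← ih]

lemma mem_playGame {x : ℕ} : ∀ {bs : List Bool} {q : List ℕ}, x ∈ playGame bs q → x ∈ q := by
  intro bs
  induction bs with
  | nil => intro q h; exact h
  | cons b bs ih =>
    intro q h
    cases q with
    | nil =>
      exact absurd (ih (by simpa [playGame] using h)) (by simp)
    | cons a q =>
      cases b
      · have := ih (by simpa [playGame] using h)
        exact List.mem_cons_of_mem _ this
      · have := ih (by simpa [playGame] using h)
        rcases List.mem_append.mp this with h1 | h1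
        · exact List.mem_cons_of_mem _ h1
        · simp at h1; simp [h1]



open Equiv

/-- Insert value `a` at position `0`. -/
def build {m : ℕ} (a : Fin (m + 2)) (σ : Perm (Fin (m + 1))) : Perm (Fin (m + 2)) :=
  (finSuccEquiv' 0).trans ((σ.optionCongr).trans (finSuccEquiv' a).symm)

/-- Insert value `v` at position `1`. -/
def build2 {m : ℕ} (v : Fin (m + 2)) (τ : Perm (Fin (m + 1))) : Perm (Fin (m + 2)) :=
  (finSuccEquiv' 1).trans ((τ.optionCongr).trans (finSuccEquiv' v).symm)

@[simp] lemma build_zero {m : ℕ} (a : Fin (m + 2)) (σ : Perm (Fin (m + 1))) :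
    build a σ 0 = a := by
  simp [build, finSuccEquiv'_at, Equiv.optionCongr]

@[simp] lemma build_succ {m : ℕ} (a : Fin (m + 2)) (σ : Perm (Fin (m + 1))) (j : Fin (m + 1)) :
    build a σ j.succ = a.succAbove (σ j) := by
  rw [build, Equiv.trans_apply, Equiv.trans_apply, ← Fin.zero_succAbove j,
    finSuccEquiv'_succAbove, Equiv.optionCongr_apply, Option.map_some, finSuccEquiv'_symm_some]

@[simp] lemma build2_one {m : ℕ} (v : Fin (m + 2)) (τ : Perm (Fin (m + 1))) :
    build2 v τ 1 = v := by
  simp [build2, finSuccEquiv'_at, Equiv.optionCongr]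

@[simp] lemma build2_zero {m : ℕ} (v : Fin (m + 2)) (τ : Perm (Fin (m + 1))) :
    build2 v τ 0 = v.succAbove (τ 0) := by
  rw [build2, Equiv.trans_apply, Equiv.trans_apply, ← Fin.one_succAbove_zero,
    finSuccEquiv'_succAbove, Equiv.optionCongr_apply, Option.map_some, finSuccEquiv'_symm_some]

lemma build2_succAbove {m : ℕ} (v : Fin (m + 2)) (τ : Perm (Fin (m + 1))) (j : Fin (m + 1)) :
    build2 v τ ((1 : Fin (m + 2)).succAbove j) = v.succAbove (τ j) := by
  rw [build2, Equiv.trans_apply, Equiv.trans_apply,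
    finSuccEquiv'_succAbove, Equiv.optionCongr_apply, Option.map_some, finSuccEquiv'_symm_some]

lemma build_surj {m : ℕ} (π : Perm (Fin (m + 2))) :
    π = build (π 0) (removeNone (((finSuccEquiv' 0).symm.trans π).trans (finSuccEquiv' (π 0)))) := by
  set e := ((finSuccEquiv' (0 : Fin (m+2))).symm.trans π).trans (finSuccEquiv' (π 0)) with he
  have hnone : e none = none := by simp [he, finSuccEquiv'_at]
  have : optionCongr (removeNone e) = e := by
    refine Equiv.ext fun x => ?_
    cases x with
    | none => simp [hnone]
    | some y =>
      have h2 : e (some y) ≠ none := by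
        intro hc
        have := e.injective (hc.trans hnone.symm)
        simp at this
      rcases Option.ne_none_iff_exists'.mp h2 with ⟨z, hz⟩
      have := removeNone_some e ⟨z, hz⟩
      simpa [Equiv.optionCongr] using this
  rw [build, this, he]
  ext x
  simp

lemma build2_surj {m : ℕ} (π : Perm (Fin (m + 2))) :
    π = build2 (π 1) (removeNone (((finSuccEquiv' 1).symm.trans π).trans (finSuccEquiv' (π 1)))) := by
  set e := ((finSuccEquiv' (1 : Fin (m+2))).symm.trans π).trans (finSuccEquiv' (π 1)) with he
  have hnone : e none = none := by simp [he, finSuccEquiv'_at]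
  have : optionCongr (removeNone e) = e := by
    refine Equiv.ext fun x => ?_
    cases x with
    | none => simp [hnone]
    | some y =>
      have h2 : e (some y) ≠ none := by
        intro hc
        have := e.injective (hc.trans hnone.symm)
        simp at this
      rcases Option.ne_none_iff_exists'.mp h2 with ⟨z, hz⟩
      have := removeNone_some e ⟨z, hz⟩
      simpa [Equiv.optionCongr] using this
  rw [build2, this, he]
  ext x
  simp

lemma build_injective {m : ℕ} (a : Fin (m + 2)) : Function.Injective (build a) := by
  intro σ τ h
  have : ∀ j, σ j = τ j := by
    intro j
    have h1 : build a σ j.succ = build a τ j.succ := by rw [h]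
    simp only [build_succ] at h1
    exact (Fin.succAbove_right_injective (p := a)) h1
  exact Equiv.ext this

lemma build2_injective2 {m : ℕ} : Function.Injective
    (fun q : Fin (m + 2) × Perm (Fin (m + 1)) => build2 q.1 q.2) := by
  intro ⟨v, τ⟩ ⟨v', τ'⟩ h
  simp only at h
  have hv : v = v' := by
    have := congrArg (fun π : Perm (Fin (m+2)) => π 1) h
    simpa using this
  subst hv
  have : ∀ j, τ j = τ' j := by
    intro j
    have h1 : build2 v τ ((1 : Fin (m+2)).succAbove j) = build2 v τ' ((1 : Fin (m+2)).succAbove j) := by rw [h]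
    simp only [build2_succAbove] at h1
    exact (Fin.succAbove_right_injective (p := v)) h1
  simp [Equiv.ext this]


open Equiv

lemma ltrMins_succ {m : ℕ} (π : Perm (Fin (m + 1))) :
    ltrMins π = true ::
      (List.finRange m).map (fun i => decide (∀ j, j < i.succ → π i.succ < π j)) := by
  unfold ltrMins
  rw [List.finRange_succ, List.map_cons, List.map_map]
  congr 1
  simp

lemma ltrMins_build {m : ℕ} (a : Fin (m + 2)) (σ : Perm (Fin (m + 1)))
    (hb : (σ 0).castSucc < a) : ltrMins (build a σ) = true :: ltrMins σ := by
  rw [ltrMins_succ]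
  unfold ltrMins
  congr 1
  refine List.map_congr_left fun i _ => ?_
  rw [decide_eq_decide]
  constructor
  · intro h j hj
    have := h j.succ (by simpa [Fin.succ_lt_succ_iff] using hj)
    rw [build_succ, build_succ] at this
    exact Fin.succAbove_lt_succAbove_iff.mp this
  · intro h j hj
    induction j using Fin.cases with
    | zero =>
      rw [build_succ, build_zero]
      have hlt : (σ i).castSucc < a := by
        rcases eq_or_ne i 0 with rfl | hi
        · exact hb
        · exact lt_trans (by
            exact_mod_cast Fin.castSucc_lt_castSucc_iff.mpr (h 0 (Fin.pos_of_ne_zero hi))) hb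
      rw [Fin.succAbove_of_castSucc_lt _ _ hlt]
      exact hlt
    | succ j' =>
      rw [build_succ, build_succ]
      exact Fin.succAbove_lt_succAbove_iff.mpr (h j' (by simpa [Fin.succ_lt_succ_iff] using hj))

lemma ltrMins_build2 {m : ℕ} (v : Fin (m + 2)) (τ : Perm (Fin (m + 1)))
    (hb : (τ 0).castSucc < v) :
    ltrMins (build2 v τ) = true :: false ::
      (List.finRange m).map (fun i => decide (∀ j, j < i.succ → τ i.succ < τ j)) := by
  have hπ0 : build2 v τ 0 = (τ 0).castSucc := by
    rw [build2_zero, Fin.succAbove_of_castSucc_lt _ _ hb]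
  unfold ltrMins
  simp only [List.finRange_succ, List.map_cons, List.map_map]
  congr 1
  · exact decide_eq_true fun j hj => absurd hj (Fin.not_lt_zero j)
  congr 1
  · -- index 1 : not a left-to-right minimum
    try simp only [Function.comp_apply]
    rw [decide_eq_false_iff_not]
    intro h
    have h0 := h 0 (by simp [Fin.lt_def])
    rw [show ((0 : Fin (m+1)).succ) = (1 : Fin (m+2)) by rfl, build2_one, hπ0] at h0
    exact absurd hb (not_lt.mpr h0.le)
  · refine List.map_congr_left fun i _ => ?_
    try simp only [Function.comp_apply]
    have hidx : (i.succ.succ : Fin (m+2)) = (1 : Fin (m+2)).succAbove i.succ := by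
      rw [Fin.one_succAbove_succ]
    rw [decide_eq_decide]
    constructor
    · intro h j hj
      induction j using Fin.cases with
      | zero =>
        have := h 0 (by simp [Fin.lt_def])
        rw [hidx, build2_succAbove, hπ0] at this
        have hle : ((τ i.succ : Fin (m+1)) : ℕ) ≤ ((v.succAbove (τ i.succ)) : ℕ) := by
          unfold Fin.succAbove
          split <;> simp
        rw [Fin.lt_def] at this ⊢
        simp only [Fin.coe_castSucc] at this
        omega
      | succ j₂ =>
        have hj' : (j₂.succ.succ : Fin (m+2)) < i.succ.succ := by
          simpa [Fin.succ_lt_succ_iff] using hj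
        have := h j₂.succ.succ hj'
        rw [hidx, build2_succAbove,
          show (j₂.succ.succ : Fin (m+2)) = (1 : Fin (m+2)).succAbove j₂.succ from
            (Fin.one_succAbove_succ j₂).symm, build2_succAbove] at this
        exact Fin.succAbove_lt_succAbove_iff.mp this
    · intro h j hj
      induction j using Fin.cases with
      | zero =>
        rw [hidx, build2_succAbove, hπ0]
        have ht : τ i.succ < τ 0 := h 0 (by simp [Fin.lt_def])
        have hlt : (τ i.succ).castSucc < v :=
          lt_trans (Fin.castSucc_lt_castSucc_iff.mpr ht) hb
        rw [Fin.succAbove_of_castSucc_lt _ _ hlt]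
        exact Fin.castSucc_lt_castSucc_iff.mpr ht
      | succ j₁ =>
        induction j₁ using Fin.cases with
        | zero =>
          rw [hidx, build2_succAbove,
            show ((0 : Fin (m+1)).succ : Fin (m+2)) = 1 from rfl, build2_one]
          have ht : τ i.succ < τ 0 := h 0 (by simp [Fin.lt_def])
          have hlt : (τ i.succ).castSucc < v :=
            lt_trans (Fin.castSucc_lt_castSucc_iff.mpr ht) hb
          rw [Fin.succAbove_of_castSucc_lt _ _ hlt]
          exact hlt
        | succ j₂ =>
          have hj' : j₂.succ < i.succ := by
            simpa [Fin.succ_lt_succ_iff] using hj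
          rw [hidx, build2_succAbove,
            show (j₂.succ.succ : Fin (m+2)) = (1 : Fin (m+2)).succAbove j₂.succ from
              (Fin.one_succAbove_succ j₂).symm, build2_succAbove]
          exact Fin.succAbove_lt_succAbove_iff.mpr (h j₂.succ hj')


def frot (p : ℕ) (x : ℕ) : ℕ := if x = p then 1 else x + 1
def grot (x : ℕ) : ℕ := if x = 1 then 1 else x + 1

lemma playGame_true (bs : List Bool) (a : ℕ) (q : List ℕ) :
    playGame (true :: bs) (a :: q) = playGame bs (q ++ [a]) := rfl

lemma playGame_false (bs : List Bool) (a : ℕ) (q : List ℕ) :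
    playGame (false :: bs) (a :: q) = playGame bs q := rfl

lemma queue_rot (p : ℕ) (hp : 1 ≤ p) :
    List.range' 2 (p - 1) ++ [1] = (List.range' 1 p).map (frot p) := by
  obtain ⟨q, rfl⟩ : ∃ q, p = q + 1 := ⟨p - 1, by omega⟩
  rw [List.range'_concat]
  rw [List.map_append]
  congr 1
  · have : ∀ x ∈ List.range' 1 q, frot (q + 1) x = 1 + x := by
      intro x hx
      rw [List.mem_range'] at hx
      obtain ⟨i, hi, rfl⟩ := hx
      simp only [frot]
      rw [if_neg (by omega)]
      omega
    rw [List.map_congr_left this, List.map_add_range']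
    simp
  · have h1 : 1 + 1 * q = q + 1 := by omega
    rw [h1]
    simp [frot]

lemma queue_rot2 (p : ℕ) :
    List.range' 3 (p - 2) ++ [1] = (List.range' 2 (p - 2) ++ [1]).map grot := by
  rw [List.map_append]
  congr 1
  · have : ∀ x ∈ List.range' 2 (p - 2), grot x = 1 + x := by
      intro x hx
      rw [List.mem_range'] at hx
      obtain ⟨i, hi, rfl⟩ := hx
      simp only [grot]
      rw [if_neg (by omega)]
      omega
    rw [List.map_congr_left this, List.map_add_range']

lemma game1 (p : ℕ) (hp : 1 ≤ p) (bs : List Bool) :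
    playGame (true :: bs) (List.range' 1 p) =
      (playGame bs (List.range' 1 p)).map (frot p) := by
  obtain ⟨q, rfl⟩ : ∃ q, p = q + 1 := ⟨p - 1, by omega⟩
  rw [List.range'_succ, playGame_true]
  rw [show List.range' (1+1) q 1 ++ [1] = List.range' 2 ((q+1) - 1) ++ [1] by norm_num,
    queue_rot _ (by omega), playGame_map, List.range'_succ]

lemma game2 (p : ℕ) (hp : 2 ≤ p) (bs : List Bool) :
    playGame (true :: false :: bs) (List.range' 1 p) =
      (playGame (true :: bs) (List.range' 1 (p - 1))).map grot := by
  obtain ⟨q, rfl⟩ : ∃ q, p = q + 2 := ⟨p - 2, by omega⟩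
  rw [List.range'_succ, playGame_true]
  rw [show List.range' (1+1) (q+1) 1 ++ [1] = 2 :: (List.range' 3 q ++ [1]) by
    rw [List.range'_succ]; norm_num]
  rw [playGame_false]
  rw [show (q + 2 - 1 : ℕ) = q + 1 from rfl, List.range'_succ, playGame_true]
  rw [show List.range' (1+1) q 1 ++ [1] = List.range' 2 (q + 2 - 2) ++ [1] by norm_num,
    show List.range' 3 q ++ [1] = List.range' 3 (q + 2 - 2) ++ [1] by norm_num,
    queue_rot2, playGame_map]

lemma map_eq_singleton {f : ℕ → ℕ} {L : List ℕ} {k : ℕ} (h : L.map f = [k]) :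
    ∃ x, L = [x] ∧ f x = k := by
  cases L with
  | nil => simp at h
  | cons a L' =>
    rw [List.map_cons] at h
    rcases List.cons_eq_cons.mp h with ⟨h1, h2⟩
    exact ⟨a, by simp [List.map_eq_nil_iff.mp h2], h1⟩

lemma winner_f {p k : ℕ} (hp : 2 ≤ p) (hk1 : 1 ≤ k) (hkp : k ≤ p) (bs : List Bool) :
    (playGame bs (List.range' 1 p)).map (frot p) = [k] ↔
      playGame bs (List.range' 1 p) = [if k = 1 then p else k - 1] := by
  constructor
  · intro h
    obtain ⟨x, hL, hfx⟩ := map_eq_singleton h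
    have hx : x ∈ List.range' 1 p := mem_playGame (by rw [hL]; simp)
    rw [List.mem_range'] at hx
    obtain ⟨i, hi, hxe⟩ := hx
    rw [hL]
    congr 1
    simp only [frot] at hfx
    split at hfx <;> split <;> omega
  · intro h
    rw [h, List.map_cons, List.map_nil]
    congr 1
    simp only [frot]
    split <;> split <;> omega

lemma winner_g {k p : ℕ} (hk : k = 1 ∨ 3 ≤ k) (bs : List Bool) :
    (playGame bs (List.range' 2 (p - 2) ++ [1])).map grot = [k] ↔
      playGame bs (List.range' 2 (p - 2) ++ [1]) = [if k = 1 then 1 else k - 1] := by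
  constructor
  · intro h
    obtain ⟨x, hL, hfx⟩ := map_eq_singleton h
    have hx : x ∈ List.range' 2 (p - 2) ++ [1] := mem_playGame (by rw [hL]; simp)
    have hx1 : 1 ≤ x := by
      rcases List.mem_append.mp hx with h1 | h1
      · rw [List.mem_range'] at h1; omega
      · simp at h1; omega
    rw [hL]
    congr 1
    simp only [grot] at hfx
    rcases hk with rfl | hk <;> split at hfx <;> split <;> omega
  · intro h
    rw [h, List.map_cons, List.map_nil]
    congr 1
    simp only [grot]
    rcases hk with rfl | hk <;> split <;> first | rfl | (split <;> omega) | omega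

lemma winner_g_ne_two (L : List ℕ) : L.map grot ≠ [2] := by
  intro h
  obtain ⟨x, hL, hfx⟩ := map_eq_singleton h
  simp only [grot] at hfx
  split at hfx <;> omega


lemma play_true_queue {p : ℕ} (hp : 2 ≤ p) (bs : List Bool) :
    playGame (true :: bs) (List.range' 1 (p - 1)) =
      playGame bs (List.range' 2 (p - 2) ++ [1]) := by
  obtain ⟨q, rfl⟩ : ∃ q, p = q + 2 := ⟨p - 2, by omega⟩
  rw [show (q + 2 - 1 : ℕ) = q + 1 from rfl, show (q + 2 - 2 : ℕ) = q from rfl,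
    List.range'_succ, playGame_true, show (1 + 1 : ℕ) = 2 from rfl]

lemma encodes_build {m p k : ℕ} (hp : 2 ≤ p) (hk1 : 1 ≤ k) (hkp : k ≤ p)
    (a : Fin (m + 2)) (σ : Perm (Fin (m + 1))) (hb : (σ 0).castSucc < a) :
    EncodesWin (m + 2) p k (build a σ) ↔
      EncodesWin (m + 1) p (if k = 1 then p else k - 1) σ := by
  unfold EncodesWin
  rw [ltrMins_build a σ hb]
  apply and_congr
  · rw [game1 p (by omega), winner_f hp hk1 hkp]
  · rw [show (m + 2 - 1 : ℕ) = m + 1 from rfl, show (m + 1 - 1 : ℕ) = m from rfl,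
      List.take_succ_cons, game1 p (by omega), List.length_map]
    simp

lemma encodes_build2 {m p k : ℕ} (hm : 1 ≤ m) (hp : 2 ≤ p) (hk : k = 1 ∨ 3 ≤ k)
    (v : Fin (m + 2)) (τ : Perm (Fin (m + 1))) (hb : (τ 0).castSucc < v) :
    EncodesWin (m + 2) p k (build2 v τ) ↔
      EncodesWin (m + 1) (p - 1) (if k = 1 then 1 else k - 1) τ := by
  obtain ⟨m', rfl⟩ : ∃ m', m = m' + 1 := ⟨m - 1, by omega⟩
  unfold EncodesWin
  rw [ltrMins_build2 v τ hb, ltrMins_succ τ]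
  apply and_congr
  · rw [game2 p hp, play_true_queue hp, winner_g hk]
  · rw [show (m' + 1 + 2 - 1 : ℕ) = (m' + 1) + 1 from rfl,
      show (m' + 1 + 1 - 1 : ℕ) = m' + 1 from rfl,
      List.take_succ_cons, List.take_succ_cons, List.take_succ_cons,
      game2 p hp, List.length_map, play_true_queue hp]
    simp

lemma castSucc_lt_of_succAbove_lt {m : ℕ} {a : Fin (m + 2)} {x : Fin (m + 1)}
    (h : a.succAbove x < a) : x.castSucc < a := by
  by_contra hc
  push_neg at hc
  rw [Fin.succAbove_of_le_castSucc _ _ hc] at h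
  rw [Fin.lt_def] at h
  rw [Fin.le_def] at hc
  simp only [Fin.val_succ, Fin.coe_castSucc] at h hc
  omega

lemma w_eq (n p k s : ℕ) [NeZero n] :
    w n p k s = {π : Perm (Fin n) | EncodesWin n p k π ∧ ((π 0 : ℕ) + 1 = s)}.ncard := by
  unfold w
  congr 1
  ext π
  simp only [Set.mem_setOf_eq, and_congr_right_iff]
  intro _
  constructor
  · intro h
    exact h 0 (Fin.val_zero _)
  · intro h i hi
    have : i = 0 := Fin.ext (by rw [hi, Fin.val_zero])
    rw [this]
    exact h

lemma ncard_prod' {α β : Type*} (s : Set α) (t : Set β) :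
    (s ×ˢ t).ncard = s.ncard * t.ncard := by
  rw [← Nat.card_coe_set_eq, ← Nat.card_coe_set_eq, ← Nat.card_coe_set_eq,
    ← Nat.card_prod]
  exact Nat.card_congr (Equiv.Set.prod s t)

lemma ncard_biUnion' {α β : Type*} [Fintype α] [DecidableEq β] (t : Finset β) (f : β → Set α)
    (h : ∀ i ∈ t, ∀ j ∈ t, i ≠ j → Disjoint (f i) (f j)) :
    (⋃ i ∈ t, f i).ncard = ∑ i ∈ t, (f i).ncard := by
  classical
  induction t using Finset.induction with
  | empty => simp
  | @insert a t ha ih =>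
    rw [Finset.sum_insert ha, Finset.set_biUnion_insert]
    have hdisj : Disjoint (f a) (⋃ i ∈ t, f i) := by
      rw [Set.disjoint_iUnion_right]
      intro i
      rw [Set.disjoint_iUnion_right]
      intro hi
      exact h a (Finset.mem_insert_self a t) i (Finset.mem_insert_of_mem hi)
        (fun hc => ha (hc ▸ hi))
    rw [Set.ncard_union_eq hdisj (Set.toFinite _) (Set.toFinite _),
      ih (fun i hi j hj hij => h i (Finset.mem_insert_of_mem hi) j
        (Finset.mem_insert_of_mem hj) hij)]

lemma master {M p k s : ℕ} (hM : 1 ≤ M) (hp : 2 ≤ p) (hk1 : 1 ≤ k) (hkp : k ≤ p)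
    (hs1 : 1 ≤ s) (hsn : s ≤ M + 2) :
    w (M + 2) p k s =
      (∑ s' ∈ Finset.Icc 1 (s - 1), w (M + 1) p (if k = 1 then p else k - 1) s')
      + (if k = 2 then 0
          else (M + 2 - s) * w (M + 1) (p - 1) (if k = 1 then 1 else k - 1) s) := by
  have h10 : (1 : Fin (M + 2)) = Fin.succ (0 : Fin (M + 1)) := by
    ext
    simp
  set K1 := if k = 1 then p else k - 1 with hK1
  set K2 := if k = 1 then 1 else k - 1 with hK2
  set a₀ : Fin (M + 2) := ⟨s - 1, by omega⟩ with ha₀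
  set S : Set (Perm (Fin (M + 2))) :=
    {π | EncodesWin (M + 2) p k π ∧ ((π 0 : ℕ) + 1 = s)} with hS
  have hwS : w (M + 2) p k s = S.ncard := w_eq _ _ _ _
  -- split according to the comparison of the first two entries
  set SA : Set (Perm (Fin (M + 2))) := S ∩ {π | π 1 < π 0} with hSAdef
  set SB : Set (Perm (Fin (M + 2))) := S ∩ {π | π 0 < π 1} with hSBdef
  have hsplit : S = SA ∪ SB := by
    ext π
    simp only [hSAdef, hSBdef, Set.mem_union, Set.mem_inter_iff, Set.mem_setOf_eq]
    constructor
    · intro h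
      have hne : π 1 ≠ π 0 := by
        intro hc
        have h01 : (1 : Fin (M + 2)) = 0 := π.injective hc
        have := congrArg Fin.val h01
        simp at this
      rcases hne.lt_or_gt with hlt | hlt
      · exact Or.inl ⟨h, hlt⟩
      · exact Or.inr ⟨h, hlt⟩
    · rintro (⟨h, _⟩ | ⟨h, _⟩) <;> exact h
  have hdisj : Disjoint SA SB := by
    rw [Set.disjoint_left]
    rintro π ⟨_, h1⟩ ⟨_, h2⟩
    simp only [Set.mem_setOf_eq] at h1 h2
    exact absurd h2 (not_lt.mpr h1.le)
  have hcard : S.ncard = SA.ncard + SB.ncard := by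
    rw [hsplit]
    exact Set.ncard_union_eq hdisj (Set.toFinite _) (Set.toFinite _)
  -- Case A: the second entry is smaller than the first
  have hSA : SA = build a₀ ''
      {σ : Perm (Fin (M + 1)) | EncodesWin (M + 1) p K1 σ ∧ ((σ 0 : ℕ) < s - 1)} := by
    ext π
    simp only [hSAdef, Set.mem_inter_iff, Set.mem_setOf_eq, Set.mem_image, hS]
    constructor
    · rintro ⟨⟨hw1, hv⟩, hlt⟩
      have hπ := build_surj π
      set σ := removeNone (((finSuccEquiv' 0).symm.trans π).trans (finSuccEquiv' (π 0))) with hσ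
      have h0 : π 0 = a₀ := Fin.ext (by simp only [ha₀]; omega)
      have h1 : π 1 = (π 0).succAbove (σ 0) := by
        conv_lhs => rw [hπ]
        rw [h10, build_succ]
      have hb : (σ 0).castSucc < π 0 := castSucc_lt_of_succAbove_lt (h1 ▸ hlt)
      refine ⟨σ, ⟨?_, ?_⟩, ?_⟩
      · rw [hπ] at hw1
        exact (encodes_build hp hk1 hkp _ _ hb).mp hw1
      · have := Fin.lt_def.mp hb
        rw [h0] at this
        simpa [ha₀] using this
      · rw [← h0, ← hπ]
    · rintro ⟨σ, ⟨hwσ, hvσ⟩, rfl⟩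
      have hb : (σ 0).castSucc < a₀ := by
        rw [Fin.lt_def]
        simpa [ha₀] using hvσ
      refine ⟨⟨?_, ?_⟩, ?_⟩
      · exact (encodes_build hp hk1 hkp a₀ σ hb).mpr hwσ
      · rw [build_zero]
        simp only [ha₀]
        omega
      · show build a₀ σ 1 < build a₀ σ 0
        rw [h10, build_succ, build_zero, Fin.succAbove_of_castSucc_lt _ _ hb]
        exact hb
  have hSAcard : SA.ncard = ∑ s' ∈ Finset.Icc 1 (s - 1), w (M + 1) p K1 s' := by
    rw [hSA, Set.ncard_image_of_injective _ (build_injective a₀)]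
    have hTA : {σ : Perm (Fin (M + 1)) | EncodesWin (M + 1) p K1 σ ∧ ((σ 0 : ℕ) < s - 1)} =
        ⋃ s' ∈ Finset.Icc 1 (s - 1),
          {σ : Perm (Fin (M + 1)) | EncodesWin (M + 1) p K1 σ ∧ ((σ 0 : ℕ) + 1 = s')} := by
      ext σ
      simp only [Set.mem_setOf_eq, Set.mem_iUnion, Finset.mem_Icc, exists_prop]
      constructor
      · rintro ⟨he, hv⟩
        exact ⟨(σ 0 : ℕ) + 1, ⟨by omega, by omega⟩, he, rfl⟩
      · rintro ⟨s', ⟨hs'1, hs'2⟩, he, hv⟩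
        exact ⟨he, by omega⟩
    rw [hTA, ncard_biUnion']
    · refine Finset.sum_congr rfl fun s' _ => ?_
      rw [w_eq]
    · intro i _ j _ hij
      rw [Set.disjoint_left]
      rintro σ ⟨_, hvi⟩ ⟨_, hvj⟩
      exact hij (hvi ▸ hvj)
  -- Case B: the second entry is larger than the first
  have hSBcard : SB.ncard =
      (if k = 2 then 0 else (M + 2 - s) * w (M + 1) (p - 1) K2 s) := by
    by_cases hsM : s = M + 2
    · have hempty : SB = ∅ := by
        rw [Set.eq_empty_iff_forall_notMem]
        rintro π ⟨⟨_, hv⟩, hlt⟩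
        have h1 : (π 0 : ℕ) = M + 1 := by omega
        have h2 := Fin.lt_def.mp hlt
        have := (π 1).isLt
        omega
      rw [hempty, Set.ncard_empty]
      have : (M + 2 - s : ℕ) = 0 := by omega
      rw [this]
      simp
    · have hsM' : s ≤ M + 1 := by omega
      by_cases hk2 : k = 2
      · -- player 2 cannot win if eliminated at the second throw
        subst hk2
        have hempty : SB = ∅ := by
          rw [Set.eq_empty_iff_forall_notMem]
          rintro π ⟨⟨⟨hw1, _⟩, hv⟩, hlt⟩
          have hπ := build2_surj π
          set τ := removeNone (((finSuccEquiv' 1).symm.trans π).trans (finSuccEquiv' (π 1)))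
            with hτ
          have h0 : π 0 = (π 1).succAbove (τ 0) := by
            conv_lhs => rw [hπ]
            rw [build2_zero]
          have hb : (τ 0).castSucc < π 1 := castSucc_lt_of_succAbove_lt (h0 ▸ hlt)
          rw [hπ, ltrMins_build2 _ _ hb, game2 p hp] at hw1
          exact winner_g_ne_two _ hw1
        rw [hempty, Set.ncard_empty, if_pos rfl]
      · have hkor : k = 1 ∨ 3 ≤ k := by omega
        have hSB : SB = (fun q : Fin (M + 2) × Perm (Fin (M + 1)) => build2 q.1 q.2) ''
            ({v : Fin (M + 2) | (s - 1 : ℕ) < (v : ℕ)} ×ˢ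
              {τ : Perm (Fin (M + 1)) | EncodesWin (M + 1) (p - 1) K2 τ ∧
                ((τ 0 : ℕ) + 1 = s)}) := by
          ext π
          simp only [hSBdef, Set.mem_inter_iff, Set.mem_setOf_eq, Set.mem_image,
            Set.mem_prod, Prod.exists, hS]
          constructor
          · rintro ⟨⟨hw1, hv⟩, hlt⟩
            have hπ := build2_surj π
            set τ := removeNone (((finSuccEquiv' 1).symm.trans π).trans (finSuccEquiv' (π 1)))
              with hτ
            have h0 : π 0 = (π 1).succAbove (τ 0) := by
              conv_lhs => rw [hπ]
              rw [build2_zero]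
            have hb : (τ 0).castSucc < π 1 := castSucc_lt_of_succAbove_lt (h0 ▸ hlt)
            have h0' : π 0 = (τ 0).castSucc := by
              rw [h0, Fin.succAbove_of_castSucc_lt _ _ hb]
            refine ⟨π 1, τ, ⟨?_, ?_, ?_⟩, ?_⟩
            · have := Fin.lt_def.mp hb
              simp only [Fin.coe_castSucc] at this
              have hτval : (τ 0 : ℕ) = s - 1 := by
                have := congrArg Fin.val h0'
                simp only [Fin.coe_castSucc] at this
                omega
              omega
            · rw [hπ] at hw1
              exact (encodes_build2 hM hp hkor _ _ hb).mp hw1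
            · have := congrArg Fin.val h0'
              simp only [Fin.coe_castSucc] at this
              omega
            · exact hπ.symm
          · rintro ⟨v, τ, ⟨hvv, hwτ, hvτ⟩, rfl⟩
            have hb : (τ 0).castSucc < v := by
              rw [Fin.lt_def]
              simp only [Fin.coe_castSucc]
              omega
            have h0' : (build2 v τ) 0 = (τ 0).castSucc := by
              rw [build2_zero, Fin.succAbove_of_castSucc_lt _ _ hb]
            refine ⟨⟨?_, ?_⟩, ?_⟩
            · exact (encodes_build2 hM hp hkor _ _ hb).mpr hwτ
            · rw [h0']
              simpa using hvτ
            · show (build2 v τ) 0 < (build2 v τ) 1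
              rw [h0', build2_one]
              exact hb
        rw [hSB, Set.ncard_image_of_injective _ build2_injective2, ncard_prod', if_neg hk2]
        congr 1
        · have hset : {v : Fin (M + 2) | (s - 1 : ℕ) < (v : ℕ)} = ↑(Finset.Ioi a₀) := by
            ext v
            simp only [Set.mem_setOf_eq, Finset.coe_Ioi, Set.mem_Ioi, Fin.lt_def, ha₀]
          rw [hset, Set.ncard_coe_finset, Fin.card_Ioi]
          simp only [ha₀]
          omega
        · rw [w_eq]
  rw [hwS, hcard, hSAcard, hSBcard]

end Dart

/-- The recurrence for the numbers `w_{n,p,k,s}`, for `n ≥ 3`, `p ≥ 2`, `1 ≤ k ≤ p`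
and `1 ≤ s ≤ n`. -/
theorem w_recurrence (n p k s : ℕ) (hn : 3 ≤ n) (hp : 2 ≤ p) (hk1 : 1 ≤ k) (hkp : k ≤ p)
    (hs1 : 1 ≤ s) (hsn : s ≤ n) :
    (k = 1 →
      w n p 1 s = (∑ s' ∈ Finset.Icc 1 (s - 1), w (n - 1) p p s')
        + (n - s) * w (n - 1) (p - 1) 1 s) ∧
    (k = 2 →
      w n p 2 s = ∑ s' ∈ Finset.Icc 1 (s - 1), w (n - 1) p 1 s') ∧
    (3 ≤ k →
      w n p k s = (∑ s' ∈ Finset.Icc 1 (s - 1), w (n - 1) p (k - 1) s')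
        + (n - s) * w (n - 1) (p - 1) (k - 1) s) := by
  obtain ⟨M, rfl⟩ : ∃ M, n = M + 2 := ⟨n - 2, by omega⟩
  have hM : 1 ≤ M := by omega
  have hn1 : (M + 2 - 1 : ℕ) = M + 1 := rfl
  refine ⟨?_, ?_, ?_⟩
  · rintro rfl
    have := Dart.master hM hp hk1 hkp hs1 hsn
    simpa using this
  · rintro rfl
    have := Dart.master hM hp hk1 hkp hs1 hsn
    simpa using this
  · intro hk3
    have := Dart.master hM hp hk1 hkp hs1 hsn
    rw [if_neg (by omega), if_neg (by omega), if_neg (by omega)] at this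
    simpa using this
end
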